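/- arXiv:2208.02603 — 6 statements merged into one kernel-verified Lean document; each statement's English description precedes it below -/
import Mathlib

section
/- Let α ∈ (0,1) and let f : ℝ → [0,∞) be measurable with ∑_{n∈ℤ} f(x−n) = 1 for almost every x ∈ ℝ and ∑_{n∈ℤ} f(x−nα) = 1/α for almost every x ∈ ℝ. Then |supp f| ≥ ⌈1/α⌉·α ≥ 2α, where |·| denotes Lebesgue measure on ℝ. -/
open MeasureTheory

noncomputable section

/-- The essential support of `f`: the smallest closed set outside of which `f` vanishes a.e. -/
def essSupp {α E : Type*} [TopologicalSpace α] [MeasureSpace α] [Zero E]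
    (f : α → E) : Set α :=
  ⋂₀ {S : Set α | IsClosed S ∧ ∀ᵐ x, x ∉ S → f x = 0}

lemma ae_zero_outside_essSupp (f : ℝ → ℝ) :
    ∀ᵐ x : ℝ, x ∉ essSupp f → f x = 0 := by
  obtain ⟨T, hTc, hTsub, hTeq⟩ := TopologicalSpace.isOpen_sUnion_countable
    (compl '' {S : Set ℝ | IsClosed S ∧ ∀ᵐ x, x ∉ S → f x = 0})
    (by rintro s ⟨S, ⟨hS, -⟩, rfl⟩; exact hS.isOpen_compl)
  have key : ∀ᵐ x : ℝ, ∀ U ∈ T, x ∈ U → f x = 0 := by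
    rw [ae_ball_iff hTc]
    intro U hU
    obtain ⟨S, ⟨-, hS⟩, rfl⟩ := hTsub hU
    filter_upwards [hS] with x hx h using hx h
  filter_upwards [key] with x hx hmem
  have hx' : x ∈ (⋂₀ {S : Set ℝ | IsClosed S ∧ ∀ᵐ x, x ∉ S → f x = 0})ᶜ := hmem
  rw [Set.compl_sInter, ← hTeq] at hx'
  obtain ⟨U, hU, hxU⟩ := hx'
  exact hx U hU hxU

lemma iUnion_J (α : ℝ) (hα : 0 < α) :
    (⋃ n : ℤ, Set.Ico (-(n : ℝ) * α) (-(n : ℝ) * α + α)) = Set.univ := by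
  ext x
  simp only [Set.mem_iUnion, Set.mem_Ico, Set.mem_univ, iff_true]
  refine ⟨-⌊x / α⌋, ?_, ?_⟩
  · push_cast
    rw [neg_neg]
    calc (⌊x / α⌋ : ℝ) * α ≤ (x / α) * α :=
          mul_le_mul_of_nonneg_right (Int.floor_le _) hα.le
      _ = x := div_mul_cancel₀ x hα.ne'
  · push_cast
    rw [neg_neg]
    have h := mul_lt_mul_of_pos_right (Int.lt_floor_add_one (x / α)) hα
    rw [div_mul_cancel₀ x hα.ne'] at h
    linarith

lemma disj_J (α : ℝ) (hα : 0 < α) :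
    Pairwise (Function.onFun Disjoint
      fun n : ℤ => Set.Ico (-(n : ℝ) * α) (-(n : ℝ) * α + α)) := by
  intro a b hab
  rw [Function.onFun, Set.disjoint_left]
  rintro x ⟨h1, h2⟩ ⟨h3, h4⟩
  apply hab
  have e1 : -(a : ℝ) < -(b : ℝ) + 1 := by
    have : -(a : ℝ) * α < (-(b : ℝ) + 1) * α := by nlinarith
    exact lt_of_mul_lt_mul_right this hα.le
  have e2 : -(b : ℝ) < -(a : ℝ) + 1 := by
    have : -(b : ℝ) * α < (-(a : ℝ) + 1) * α := by nlinarith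
    exact lt_of_mul_lt_mul_right this hα.le
  have e1' : -a < -b + 1 := by exact_mod_cast e1
  have e2' : -b < -a + 1 := by exact_mod_cast e2
  omega

/-- If `α ∈ (0,1)` and the nonnegative measurable `f : ℝ → [0,∞)` tiles
with `ℤ` at level 1 and with `αℤ` at level `1/α`, then `|supp f| ≥ ⌈1/α⌉·α ≥ 2α`. -/
theorem support_length_lower_bound_two_lattices
    (α : ℝ) (hα : α ∈ Set.Ioo (0 : ℝ) 1)
    (f : ℝ → ℝ) (hmeas : Measurable f) (hnn : ∀ x, 0 ≤ f x)
    (h1 : ∀ᵐ x : ℝ, (Summable fun n : ℤ => f (x - n)) ∧ ∑' n : ℤ, f (x - n) = 1)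
    (h2 : ∀ᵐ x : ℝ, (Summable fun n : ℤ => f (x - n * α)) ∧
      ∑' n : ℤ, f (x - n * α) = 1 / α) :
    ENNReal.ofReal ((⌈1 / α⌉ : ℝ) * α) ≤ volume (essSupp f) ∧
      2 * α ≤ (⌈1 / α⌉ : ℝ) * α := by
  obtain ⟨hα0, hα1⟩ := hα
  have hone : (1 : ℝ) < 1 / α := by rw [lt_div_iff₀ hα0]; linarith
  have hceil2 : (2 : ℤ) ≤ ⌈1 / α⌉ := by
    have := Int.lt_ceil.2 (show ((1 : ℤ) : ℝ) < 1 / α by exact_mod_cast hone)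
    omega
  have hceil2R : (2 : ℝ) ≤ (⌈1 / α⌉ : ℝ) := by exact_mod_cast hceil2
  refine ⟨?_, mul_le_mul_of_nonneg_right hceil2R hα0.le⟩
  set m : ℕ := (⌈1 / α⌉).toNat with hm
  have hmcast : ((m : ℤ)) = ⌈1 / α⌉ := Int.toNat_of_nonneg (by omega)
  have hmR : ((m : ℝ)) = (⌈1 / α⌉ : ℝ) := by exact_mod_cast hmcast
  set P : Set ℝ := Function.support f with hP
  have hPmeas : MeasurableSet P := measurableSet_support hmeas
  -- f ≤ 1 a.e.
  have hb : ∀ᵐ x : ℝ, f x ≤ 1 := by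
    filter_upwards [h1] with x hx
    obtain ⟨hs, ht⟩ := hx
    have := hs.le_tsum 0 (fun j _ => hnn _)
    simpa using this.trans_eq ht
  -- translated bound
  have hB : ∀ᵐ x : ℝ, ∀ n : ℤ, f (x - n * α) ≤ 1 := by
    rw [ae_all_iff]
    intro n
    exact ((measurePreserving_sub_right volume
      ((n : ℝ) * α)).quasiMeasurePreserving.tendsto_ae).eventually hb
  -- a.e. x, at least m lattice translates hit the support
  have hcount : ∀ᵐ x : ℝ,
      (m : ENNReal) ≤ ∑' n : ℤ, P.indicator (1 : ℝ → ENNReal) (x - n * α) := by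
    filter_upwards [h2, hB] with x hx hle
    obtain ⟨hs, ht⟩ := hx
    obtain ⟨t, hts, htcard⟩ :
        ∃ t : Finset ℤ, ↑t ⊆ {n : ℤ | f (x - n * α) ≠ 0} ∧ t.card = m := by
      by_cases hfin : {n : ℤ | f (x - n * α) ≠ 0}.Finite
      · rcases le_or_gt m hfin.toFinset.card with h | h
        · obtain ⟨t, hts, htc⟩ := Finset.exists_subset_card_eq h
          exact ⟨t, fun n hn => hfin.mem_toFinset.1 (hts hn), htc⟩
        · exfalso
          have heq : ∑' n : ℤ, f (x - n * α) = ∑ n ∈ hfin.toFinset, f (x - n * α) :=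
            tsum_eq_sum (fun b hb => by
              by_contra hne
              exact hb (hfin.mem_toFinset.2 hne))
          have hsle : ∑ n ∈ hfin.toFinset, f (x - n * α) ≤ (hfin.toFinset.card : ℝ) := by
            calc ∑ n ∈ hfin.toFinset, f (x - n * α) ≤ ∑ _n ∈ hfin.toFinset, (1 : ℝ) :=
                  Finset.sum_le_sum fun i _ => hle i
              _ = (hfin.toFinset.card : ℝ) := by simp
          have hcardR : (hfin.toFinset.card : ℝ) ≤ (m : ℝ) - 1 := by
            have : hfin.toFinset.card + 1 ≤ m := h
            have := (Nat.cast_le (α := ℝ)).2 this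
            push_cast at this
            linarith
          have hlt : (m : ℝ) - 1 < 1 / α := by
            rw [hmR]
            linarith [Int.ceil_lt_add_one (1 / α)]
          rw [heq] at ht
          linarith
      · exact Set.Infinite.exists_subset_card_eq hfin m
    have hind : ∀ n ∈ t, P.indicator (1 : ℝ → ENNReal) (x - n * α) = 1 := by
      intro n hn
      exact Set.indicator_of_mem (Function.mem_support.2 (hts hn)) 1
    calc (m : ENNReal) = ∑ n ∈ t, P.indicator (1 : ℝ → ENNReal) (x - n * α) := by
          rw [Finset.sum_congr rfl hind, Finset.sum_const, htcard]; simp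
      _ ≤ _ := ENNReal.sum_le_tsum t
  have hmeas_ind : ∀ n : ℤ,
      Measurable fun x : ℝ => P.indicator (1 : ℝ → ENNReal) (x - n * α) :=
    fun n => (measurable_one.indicator hPmeas).comp (measurable_id.sub_const _)
  -- lower bound for the integral over a fundamental domain
  have hInt1 : (m : ENNReal) * volume (Set.Ico (0 : ℝ) α)
      ≤ ∫⁻ x in Set.Ico (0 : ℝ) α, ∑' n : ℤ, P.indicator (1 : ℝ → ENNReal) (x - n * α) := by
    rw [← setLIntegral_const]
    exact lintegral_mono_ae (ae_restrict_of_ae hcount)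
  -- compute the integral
  have hInt2 : (∫⁻ x in Set.Ico (0 : ℝ) α,
      ∑' n : ℤ, P.indicator (1 : ℝ → ENNReal) (x - n * α))
      = ∑' n : ℤ, volume (P ∩ Set.Ico (-(n : ℝ) * α) (-(n : ℝ) * α + α)) := by
    rw [lintegral_tsum (fun n => ((hmeas_ind n).aemeasurable).restrict)]
    congr 1
    funext n
    have hQ : MeasurableSet ((fun x : ℝ => x - (n : ℝ) * α) ⁻¹' P) :=
      hPmeas.preimage (measurable_id.sub_const _)
    have e1 : (fun x : ℝ => P.indicator (1 : ℝ → ENNReal) (x - n * α))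
        = ((fun x : ℝ => x - (n : ℝ) * α) ⁻¹' P).indicator (1 : ℝ → ENNReal) := by
      funext x
      rw [← Set.indicator_comp_right (fun x : ℝ => x - (n : ℝ) * α)
        (g := (1 : ℝ → ENNReal))]
      rfl
    rw [e1, ← lintegral_indicator measurableSet_Ico, Set.indicator_indicator,
      lintegral_indicator_one (measurableSet_Ico.inter hQ), Set.inter_comm]
    have e2 : ((fun x : ℝ => x - (n : ℝ) * α) ⁻¹' P) ∩ Set.Ico 0 α
        = (fun x : ℝ => x - (n : ℝ) * α) ⁻¹'
          (P ∩ Set.Ico (-(n : ℝ) * α) (-(n : ℝ) * α + α)) := by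
      ext x
      simp only [Set.mem_inter_iff, Set.mem_preimage, Set.mem_Ico]
      constructor
      · rintro ⟨hxP, hx0, hxα⟩
        exact ⟨hxP, by linarith, by linarith⟩
      · rintro ⟨hxP, hx0, hxα⟩
        exact ⟨hxP, by linarith, by linarith⟩
    rw [e2, (measurePreserving_sub_right volume ((n : ℝ) * α)).measure_preimage
      ((hPmeas.inter measurableSet_Ico).nullMeasurableSet)]
  -- sum the translates : they partition ℝ
  have hsum : (∑' n : ℤ, volume (P ∩ Set.Ico (-(n : ℝ) * α) (-(n : ℝ) * α + α)))
      = volume P := by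
    rw [← measure_iUnion
      (fun a b hab => ((disj_J α hα0 hab).mono Set.inter_subset_right Set.inter_subset_right))
      (fun n => hPmeas.inter measurableSet_Ico)]
    rw [← Set.inter_iUnion, iUnion_J α hα0, Set.inter_univ]
  have hvol : volume (Set.Ico (0 : ℝ) α) = ENNReal.ofReal α := by
    rw [Real.volume_Ico, sub_zero]
  have hPvol : ENNReal.ofReal ((⌈1 / α⌉ : ℝ) * α) ≤ volume P := by
    have : ENNReal.ofReal ((⌈1 / α⌉ : ℝ) * α) = (m : ENNReal) * ENNReal.ofReal α := by
      rw [← hmR, ENNReal.ofReal_mul (by positivity), ENNReal.ofReal_natCast]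
    rw [this, ← hvol]
    calc (m : ENNReal) * volume (Set.Ico (0 : ℝ) α) ≤ _ := hInt1
      _ = _ := hInt2
      _ = volume P := hsum
  refine hPvol.trans (measure_mono_ae ?_)
  filter_upwards [ae_zero_outside_essSupp f] with x hx hxP
  by_contra h
  exact hxP (hx h)

end
end

section
/- Let Λ = A·ℤ^d be a lattice in ℝ^d and let f ∈ L¹(ℝ^d) tile with Λ at level c. Then the Fourier transform f̂ vanishes at every nonzero point of the dual lattice: f̂(ξ) = 0 for all ξ ∈ Λ* \ {0}. -/
open MeasureTheory Convolution

noncomputable section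

/-- The lattice `A·ℤ^d` in `ℝ^d`. -/
def latticeOf {d : ℕ} (A : Matrix (Fin d) (Fin d) ℝ) :
    Set (EuclideanSpace ℝ (Fin d)) :=
  {x | ∃ m : Fin d → ℤ, x = A.mulVec (fun i => (m i : ℝ))}

/-- `f` tiles with the set `Λ` at level `c`: for a.e. `x` the series
`∑_{λ∈Λ} f(x-λ)` converges (absolutely, as summability in `ℝ` is absolute) to `c`. -/
def TilesAt {d : ℕ} (f : EuclideanSpace ℝ (Fin d) → ℝ)
    (Λ : Set (EuclideanSpace ℝ (Fin d))) (c : ℝ) : Prop :=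
  ∀ᵐ x : EuclideanSpace ℝ (Fin d),
    (Summable fun l : Λ => f (x - (l : EuclideanSpace ℝ (Fin d)))) ∧
    ∑' l : Λ, f (x - (l : EuclideanSpace ℝ (Fin d))) = c

/-- Iterated convolution `f₁ * f₂ * ⋯ * f_N` of a list of functions. -/
def convList {d : ℕ} :
    List (EuclideanSpace ℝ (Fin d) → ℝ) → (EuclideanSpace ℝ (Fin d) → ℝ)
  | [] => fun _ => 0
  | [g] => g
  | g :: gs => g ⋆[ContinuousLinearMap.lsmul ℝ ℝ] convList gs

open FourierTransform Set Submodule Matrix Pointwise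

lemma char_int (k : ℤ) : (𝐞 ((k:ℝ)) : ℂ) = 1 := by
  rw [Real.fourierChar_apply]
  rw [show ((2 * Real.pi * (k:ℝ) : ℝ) : ℂ) * Complex.I = (k:ℂ) * (2 * Real.pi * Complex.I) by
    push_cast; ring]
  exact Complex.exp_int_mul_two_pi_mul_I k

lemma char_neg_int (k : ℤ) : (𝐞 (-(k:ℝ)) : ℂ) = 1 := by
  rw [show -(k:ℝ) = ((-k : ℤ) : ℝ) by push_cast; ring, char_int]

lemma char_half : (𝐞 (-(1/2 : ℝ)) : ℂ) = -1 := by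
  rw [Real.fourierChar_apply]
  rw [show ((2 * Real.pi * -(1/2) : ℝ) : ℂ) * Complex.I = -(Real.pi * Complex.I) by
    push_cast; ring]
  rw [Complex.exp_neg, Complex.exp_pi_mul_I]
  norm_num

/-- If `f ∈ L¹(ℝ^d)` tiles with the lattice `Λ = A·ℤ^d` at level `c`,
then its Fourier transform vanishes on the dual lattice `Λ* = A^{−⊤}·ℤ^d` away from 0. -/
theorem fourier_vanishes_on_dual_lattice
    {d : ℕ} (A : Matrix (Fin d) (Fin d) ℝ) (hA : A.det ≠ 0)
    (f : EuclideanSpace ℝ (Fin d) → ℝ) (hf : Integrable f)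
    (c : ℝ) (ht : TilesAt f (latticeOf A) c) :
    ∀ ξ ∈ latticeOf (A⁻¹).transpose, ξ ≠ 0 →
      FourierTransform.fourier (fun x => (f x : ℂ)) ξ = 0 := by
  classical
  intro ξ hξmem hξ0
  have hA' : IsUnit A.det := isUnit_iff_ne_zero.mpr hA
  haveI := A.invertibleOfIsUnitDet hA'
  let LE : (Fin d → ℝ) ≃ₗ[ℝ] EuclideanSpace ℝ (Fin d) :=
    (Matrix.toLinearEquiv' A ‹_›).trans (WithLp.linearEquiv 2 ℝ (Fin d → ℝ)).symm
  have hLE : ∀ w, LE w = A.mulVec w := fun w => rfl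
  let b : Module.Basis (Fin d) ℝ (EuclideanSpace ℝ (Fin d)) := (Pi.basisFun ℝ (Fin d)).map LE
  -- the lattice as a ℤ-span
  have h1 : ∀ m : Fin d → ℤ, (WithLp.toLp 2 (A.mulVec (fun i => (m i : ℝ))) : EuclideanSpace ℝ (Fin d)) = ∑ i, m i • b i := by
    intro m
    have key : ∀ i : Fin d, m i • b i = LE ((m i : ℝ) • (Pi.single i (1:ℝ) : Fin d → ℝ)) := by
      intro i
      rw [_root_.map_smul]
      have hb : b i = LE (Pi.single i (1:ℝ)) := by
        simp only [b, Module.Basis.map_apply, Pi.basisFun_apply]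
      rw [hb, Int.cast_smul_eq_zsmul]
    rw [Finset.sum_congr rfl (fun i _ => key i), ← map_sum]
    apply WithLp.ofLp_injective
    rw [hLE, WithLp.ofLp_toLp]
    congr 1
    funext j
    simp [Pi.single_apply]
  set L := (span ℤ (Set.range ⇑b)).toAddSubgroup with hLdef
  have hset : latticeOf A = (L : Set (EuclideanSpace ℝ (Fin d))) := by
    ext x
    constructor
    · rintro ⟨m, hm⟩
      rw [show x = WithLp.toLp 2 x.ofLp from rfl, hm, h1]
      exact sum_mem (fun i _ => zsmul_mem (subset_span (Set.mem_range_self i)) _)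
    · intro hx
      have hx' : x ∈ span ℤ (Set.range ⇑b) := hx
      rw [mem_span_range_iff_exists_fun] at hx'
      obtain ⟨m, hm⟩ := hx'
      exact ⟨m, by rw [← hm, ← h1]⟩
  haveI : Countable L := (inferInstance : Countable (span ℤ (Set.range ⇑b)))
  set D := ZSpan.fundamentalDomain b with hDdef
  have hD : IsAddFundamentalDomain L D volume := ZSpan.isAddFundamentalDomain' b volume
  -- dual pairing is integral
  obtain ⟨n, hn⟩ := hξmem
  have hint : ∀ l : L, ∃ k : ℤ, (inner ℝ (l : EuclideanSpace ℝ (Fin d)) ξ : ℝ) = (k : ℝ) := by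
    rintro ⟨l, hl⟩
    have hl' : l ∈ latticeOf A := by rw [hset]; exact hl
    obtain ⟨m, hm⟩ := hl'
    refine ⟨∑ i, m i * n i, ?_⟩
    have h0 : (inner ℝ (l : EuclideanSpace ℝ (Fin d)) ξ : ℝ)
        = (A.mulVec (fun i => (m i : ℝ))) ⬝ᵥ ((A⁻¹).transpose.mulVec (fun i => (n i : ℝ))) := by
      simp only [PiLp.inner_apply, hm, hn]
      simp [dotProduct, mul_comm]
    rw [h0, dotProduct_comm, dotProduct_mulVec, ← mulVec_transpose, mulVec_mulVec,
      ← transpose_mul, Matrix.nonsing_inv_mul A hA', transpose_one, one_mulVec]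
    push_cast
    simp [dotProduct, mul_comm]
  -- the character
  set χ : EuclideanSpace ℝ (Fin d) → ℂ := fun y => ((𝐞 (-(inner ℝ y ξ : ℝ)) : Circle) : ℂ) with hχdef
  have hchar_add : ∀ s t : ℝ, (𝐞 (-(s + t)) : ℂ) = (𝐞 (-s) : ℂ) * (𝐞 (-t) : ℂ) := by
    intro s t
    rw [neg_add, AddChar.map_add_eq_mul]
    rfl
  have hper : ∀ (l : L) (x : EuclideanSpace ℝ (Fin d)), χ ((l : EuclideanSpace ℝ (Fin d)) + x) = χ x := by
    intro l x
    obtain ⟨k, hk⟩ := hint l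
    have : (inner ℝ ((l : EuclideanSpace ℝ (Fin d)) + x) ξ : ℝ) = (k : ℝ) + (inner ℝ x ξ : ℝ) := by
      rw [inner_add_left, hk]
    rw [hχdef]
    simp only
    rw [this, hchar_add, char_neg_int]
    ring
  -- the constant-translate integral vanishes
  have hξnorm : (‖ξ‖ : ℝ) ≠ 0 := norm_ne_zero_iff.mpr hξ0
  set v : EuclideanSpace ℝ (Fin d) := (2 * ‖ξ‖^2)⁻¹ • ξ with hvdef
  have hv : (inner ℝ v ξ : ℝ) = 1/2 := by
    rw [hvdef, real_inner_smul_left, real_inner_self_eq_norm_sq]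
    field_simp
  have hχv : χ v = -1 := by rw [hχdef]; simp only [hv]; exact char_half
  haveI : VAddCommClass (EuclideanSpace ℝ (Fin d)) L (EuclideanSpace ℝ (Fin d)) :=
    ⟨fun a l x => by
      show a + ((l : EuclideanSpace ℝ (Fin d)) + x) = (l : EuclideanSpace ℝ (Fin d)) + (a + x)
      exact add_left_comm a _ x⟩
  have hD' : IsAddFundamentalDomain L (v +ᵥ D) volume := hD.vadd_of_comm v
  have hJ : (∫ x in D, χ x) = 0 := by
    have h2 : (∫ x in D, χ x) = ∫ x in v +ᵥ D, χ x := hD.setIntegral_eq hD' hper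
    have h3 : (∫ x in v +ᵥ D, χ x) = ∫ x in D, χ (v + x) := by
      rw [show v +ᵥ D = (fun x => v + x) '' D from rfl]
      exact (measurePreserving_add_left volume v).setIntegral_image_emb
        (MeasurableEquiv.addLeft v).measurableEmbedding _ _
    have h4 : ∀ x, χ (v + x) = - χ x := by
      intro x
      have : (inner ℝ (v + x) ξ : ℝ) = (1/2 : ℝ) + (inner ℝ x ξ : ℝ) := by
        rw [inner_add_left, hv]
      rw [hχdef]
      simp only
      rw [this, hchar_add]
      rw [show ((𝐞 (-(1/2:ℝ)) : Circle) : ℂ) = -1 from char_half]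
      ring
    have h5 : (∫ x in D, χ (v + x)) = - ∫ x in D, χ x := by
      simp_rw [h4]
      exact integral_neg _
    have h6 := h2.trans (h3.trans h5)
    linear_combination h6 / 2
  -- re-index the tiling over the subgroup
  rw [hset] at ht
  have hae : ∀ᵐ x : EuclideanSpace ℝ (Fin d),
      (Summable fun l : L => f (x + (l : EuclideanSpace ℝ (Fin d)))) ∧
      ∑' l : L, f (x + (l : EuclideanSpace ℝ (Fin d))) = c := by
    let e : L ≃ ((L : Set (EuclideanSpace ℝ (Fin d))) : Set (EuclideanSpace ℝ (Fin d))) :=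
      { toFun := fun l => ⟨-(l : EuclideanSpace ℝ (Fin d)), SetLike.mem_coe.mpr (neg_mem l.2)⟩
        invFun := fun y => ⟨-(y : EuclideanSpace ℝ (Fin d)), neg_mem (SetLike.mem_coe.mp y.2)⟩
        left_inv := fun l => by ext; simp
        right_inv := fun y => by ext; simp }
    filter_upwards [ht] with x hx
    have hfun : (fun l : L => f (x - ((e l : EuclideanSpace ℝ (Fin d)))))
        = fun l : L => f (x + (l : EuclideanSpace ℝ (Fin d))) := by
      funext l
      simp only [e, Equiv.coe_fn_mk, sub_neg_eq_add]
    constructor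
    · have := (e.summable_iff
        (f := fun y : ((L : Set (EuclideanSpace ℝ (Fin d))) : Set (EuclideanSpace ℝ (Fin d))) =>
          f (x - (y : EuclideanSpace ℝ (Fin d))))).mpr hx.1
      rwa [show ((fun y : ((L : Set (EuclideanSpace ℝ (Fin d))) : Set (EuclideanSpace ℝ (Fin d))) =>
          f (x - (y : EuclideanSpace ℝ (Fin d)))) ∘ e) = _ from hfun] at this
    · have := e.tsum_eq
        (f := fun y : ((L : Set (EuclideanSpace ℝ (Fin d))) : Set (EuclideanSpace ℝ (Fin d))) =>
          f (x - (y : EuclideanSpace ℝ (Fin d))))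
      rw [show (fun l : L => f (x - ((e l : EuclideanSpace ℝ (Fin d))))) = _ from hfun] at this
      rw [this, hx.2]
  -- the integrand
  set g : EuclideanSpace ℝ (Fin d) → ℂ := fun y => χ y * (f y : ℂ) with hgdef
  have hgi : Integrable g := by
    have h := (Real.fourierIntegral_convergent_iff (f := fun x => (f x : ℂ)) (w := ξ)).mpr hf.ofReal
    have : (fun v => 𝐞 (-(inner ℝ v ξ : ℝ)) • ((f v : ℂ))) = g := by
      funext y
      rw [Circle.smul_def, smul_eq_mul, hgdef]
    rwa [this] at h
  have key : FourierTransform.fourier (fun x => (f x : ℂ)) ξ = ∫ y, g y := by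
    rw [Real.fourier_eq]
    rfl
  have hnn : ∀ y, (‖g y‖₊ : ENNReal) = (‖f y‖₊ : ENNReal) := by
    intro y
    have h1 : ‖g y‖ = ‖f y‖ := by
      rw [hgdef]
      simp only [norm_mul, Complex.norm_real]
      rw [show ‖χ y‖ = 1 by simp [hχdef, Circle.norm_coe], one_mul]
    rw [show ‖g y‖₊ = ‖f y‖₊ from NNReal.eq h1]
  have hmeas : ∀ l : L, AEStronglyMeasurable
      (fun x => g ((l : EuclideanSpace ℝ (Fin d)) + x)) (volume.restrict D) := by
    intro l
    have h := ((measurePreserving_add_left volume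
        (l : EuclideanSpace ℝ (Fin d))).aestronglyMeasurable_comp_iff
      (MeasurableEquiv.addLeft (l : EuclideanSpace ℝ (Fin d))).measurableEmbedding).mpr
      hgi.aestronglyMeasurable
    exact h.restrict
  have hsum : ∑' l : L, ∫⁻ x in D, (‖g ((l : EuclideanSpace ℝ (Fin d)) + x)‖₊ : ENNReal) ≠ ⊤ := by
    have heq : ∀ l : L, (∫⁻ x in D, (‖g ((l : EuclideanSpace ℝ (Fin d)) + x)‖₊ : ENNReal))
        = ∫⁻ x in D, (‖f ((l : EuclideanSpace ℝ (Fin d)) + x)‖₊ : ENNReal) :=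
      fun l => lintegral_congr fun x => hnn _
    rw [tsum_congr heq]
    have h := hD.lintegral_eq_tsum'' (fun y => (‖f y‖₊ : ENNReal))
    exact h ▸ hf.2.ne
  have step1 : (∫ y, g y) = ∑' l : L, ∫ x in D, g ((l : EuclideanSpace ℝ (Fin d)) + x) :=
    hD.integral_eq_tsum'' g hgi
  have step2 : (∑' l : L, ∫ x in D, g ((l : EuclideanSpace ℝ (Fin d)) + x))
      = ∫ x in D, ∑' l : L, g ((l : EuclideanSpace ℝ (Fin d)) + x) :=
    (integral_tsum hmeas hsum).symm
  have step3 : (∫ x in D, ∑' l : L, g ((l : EuclideanSpace ℝ (Fin d)) + x))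
      = ∫ x in D, χ x * (c : ℂ) := by
    refine integral_congr_ae (ae_restrict_of_ae ?_)
    filter_upwards [hae] with x hx
    have hterm : ∀ l : L, g ((l : EuclideanSpace ℝ (Fin d)) + x)
        = χ x * (f (x + (l : EuclideanSpace ℝ (Fin d))) : ℂ) := by
      intro l
      rw [hgdef]
      simp only
      rw [hper l x, add_comm (l : EuclideanSpace ℝ (Fin d)) x]
    calc ∑' l : L, g ((l : EuclideanSpace ℝ (Fin d)) + x)
        = ∑' l : L, χ x * (f (x + (l : EuclideanSpace ℝ (Fin d))) : ℂ) := tsum_congr hterm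
      _ = χ x * ∑' l : L, (f (x + (l : EuclideanSpace ℝ (Fin d))) : ℂ) := tsum_mul_left
      _ = χ x * ((∑' l : L, f (x + (l : EuclideanSpace ℝ (Fin d))) : ℝ) : ℂ) := by
          rw [Complex.ofReal_tsum]
      _ = χ x * (c : ℂ) := by rw [hx.2]
  have step4 : (∫ x in D, χ x * (c : ℂ)) = (∫ x in D, χ x) * (c : ℂ) := integral_mul_const _ _
  rw [key, step1, step2, step3, step4, hJ, zero_mul]

end
end

section
/- Let Λ be a lattice in ℝ^d and let f ∈ L¹(ℝ^d) tile with Λ at level c ≠ 0. Then the essential support of f has Lebesgue measure at least vol(Λ): |supp f| ≥ vol(Λ). -/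
open MeasureTheory Convolution

noncomputable section

/-- Almost every point where `f` is nonzero lies in the essential support. -/
lemma ae_mem_essSupp {α E : Type*} [TopologicalSpace α] [SecondCountableTopology α]
    [MeasureSpace α] [Zero E] (f : α → E) :
    ∀ᵐ x, f x ≠ 0 → x ∈ essSupp f := by
  rw [ae_iff]
  have h : {x | ¬ (f x ≠ 0 → x ∈ essSupp f)} = {x | f x ≠ 0 ∧ x ∉ essSupp f} := by
    ext x; simp only [Set.mem_setOf_eq]; tauto
  rw [h]
  apply measure_null_of_locally_null
  rintro x ⟨hfx, hx⟩
  rw [essSupp, Set.mem_sInter] at hx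
  push_neg at hx
  obtain ⟨S, ⟨hScl, hS0⟩, hxS⟩ := hx
  refine ⟨Sᶜ ∩ {x | f x ≠ 0 ∧ x ∉ essSupp f}, ?_, ?_⟩
  · exact Filter.inter_mem (nhdsWithin_le_nhds (hScl.isOpen_compl.mem_nhds hxS))
      self_mem_nhdsWithin
  · refine measure_mono_null ?_ (ae_iff.mp hS0)
    rintro y ⟨hyS, hfy, -⟩
    exact fun h => hfy (h hyS)

open Submodule Pointwise in
/-- If `f ∈ L¹(ℝ^d)` tiles with the lattice `Λ = A·ℤ^d` at level
`c ≠ 0`, then `|supp f| ≥ vol(Λ) = |det A|`. -/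
theorem support_volume_lower_bound_single_lattice
    {d : ℕ} (A : Matrix (Fin d) (Fin d) ℝ) (hA : A.det ≠ 0)
    (f : EuclideanSpace ℝ (Fin d) → ℝ) (hf : Integrable f)
    (c : ℝ) (hc : c ≠ 0) (ht : TilesAt f (latticeOf A) c) :
    ENNReal.ofReal |A.det| ≤ volume (essSupp f) := by
  classical
  have hA' : IsUnit A.det := isUnit_iff_ne_zero.mpr hA
  -- the basis of ℝ^d given by the columns of A
  let e : Module.Basis (Fin d) ℝ (EuclideanSpace ℝ (Fin d)) := (EuclideanSpace.basisFun (Fin d) ℝ).toBasis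
  let b : Module.Basis (Fin d) ℝ (EuclideanSpace ℝ (Fin d)) := e.map (Matrix.toLinearEquiv e A hA')
  have hb : ∀ i j, b i j = A j i := by
    intro i j
    show (Matrix.toLinearEquiv e A hA') (e i) j = A j i
    rw [Matrix.toLinearEquiv_apply, Matrix.toLin_self]
    have h1 : (∑ x : Fin d, A x i • e x) j = ∑ x : Fin d, (A x i • e x) j :=
      by rw [WithLp.ofLp_sum, Finset.sum_apply]
    rw [h1]
    have h2 : ∀ x, e x = EuclideanSpace.single x (1:ℝ) := fun x => by
      simp [e, EuclideanSpace.basisFun_apply]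
    simp [h2, PiLp.smul_apply, EuclideanSpace.single_apply]
  -- the lattice is the ℤ-span of this basis
  have key : ∀ m : Fin d → ℤ,
      WithLp.toLp 2 (A.mulVec (fun i => (m i : ℝ))) = ∑ i, m i • b i := by
    intro m
    ext j
    have h1 : (∑ i, m i • b i) j = ∑ i, (m i • b i) j := by rw [WithLp.ofLp_sum, Finset.sum_apply]
    rw [h1]
    simp only [WithLp.ofLp_toLp, Matrix.mulVec, dotProduct]
    refine Finset.sum_congr rfl fun i _ => ?_
    have : (m i • b i) j = m i • (b i j) := rfl
    rw [this, hb, zsmul_eq_mul, mul_comm]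
  have hset : latticeOf A = ↑(span ℤ (Set.range ⇑b)) := by
    ext x
    constructor
    · rintro ⟨m, hm⟩
      rw [show x = WithLp.toLp 2 _ from congrArg (WithLp.toLp 2) hm, key m]
      exact sum_mem fun i _ => zsmul_mem (subset_span (Set.mem_range_self i)) _
    · intro hx
      obtain ⟨m, hm⟩ := (mem_span_range_iff_exists_fun ℤ).mp hx
      exact ⟨m, by rw [← hm, ← key m]⟩
  -- the volume of the fundamental domain
  have hfd_e : volume (ZSpan.fundamentalDomain e) = 1 := by
    have heq : ZSpan.fundamentalDomain e =
        (MeasurableEquiv.toLp 2 (Fin d → ℝ)).symm ⁻¹' (Set.univ.pi fun _ => Set.Ico (0:ℝ) 1) := by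
      ext x
      simp only [ZSpan.fundamentalDomain, Set.mem_setOf_eq, Set.mem_preimage, Set.mem_pi,
        Set.mem_univ, forall_true_left]
      constructor
      · intro h i
        simpa [e, OrthonormalBasis.coe_toBasis_repr_apply, EuclideanSpace.basisFun_repr] using h i
      · intro h i
        simpa [e, OrthonormalBasis.coe_toBasis_repr_apply, EuclideanSpace.basisFun_repr] using h i
    rw [heq, (EuclideanSpace.volume_preserving_symm_measurableEquiv_toLp (Fin d)).measure_preimage
      (MeasurableSet.pi Set.countable_univ fun _ _ => measurableSet_Ico).nullMeasurableSet]
    simp [volume_pi, Measure.pi_pi, Real.volume_Ico]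
  have hdet : e.det ⇑b = A.det := by
    rw [Module.Basis.det_apply]
    congr 1
    ext i j
    rw [Module.Basis.toMatrix_apply]
    have : e.repr (b j) i = (b j) i := by
      simp [e, OrthonormalBasis.coe_toBasis_repr_apply, EuclideanSpace.basisFun_repr]
    rw [this, hb]
  have hvol : volume (ZSpan.fundamentalDomain b) = ENNReal.ofReal |A.det| := by
    rw [ZSpan.measure_fundamentalDomain b volume e, hfd_e, mul_one, hdet]
  -- instances
  haveI hcnt : Countable ↥(span ℤ (Set.range ⇑b)) := by
    have h1 : Set.Countable (latticeOf A) := by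
      have : latticeOf A = Set.range
          (fun m : Fin d → ℤ => WithLp.toLp 2 (A.mulVec (fun i => (m i : ℝ)))) := by
        ext x; simp only [latticeOf, Set.mem_setOf_eq, Set.mem_range]
        exact ⟨fun ⟨m, hm⟩ => ⟨m, by rw [← hm]⟩, fun ⟨m, hm⟩ => ⟨m, by rw [← hm]⟩⟩
      rw [this]; exact Set.countable_range _
    rw [hset] at h1
    exact h1.to_subtype
  haveI : MeasurableVAdd ↥(span ℤ (Set.range ⇑b)) (EuclideanSpace ℝ (Fin d)) :=
    { measurable_const_vadd := fun c => by
        show Measurable fun x => (↑c : EuclideanSpace ℝ (Fin d)) + x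
        exact measurable_const_add _
      measurable_vadd_const := fun x => by
        show Measurable fun g : ↥(span ℤ (Set.range ⇑b)) => (↑g : EuclideanSpace ℝ (Fin d)) + x
        exact measurable_subtype_coe.add_const x }
  haveI : VAddInvariantMeasure ↥(span ℤ (Set.range ⇑b)) (EuclideanSpace ℝ (Fin d)) volume :=
    ⟨fun g s _ => by
      show volume ((fun x => (↑g : EuclideanSpace ℝ (Fin d)) + x) ⁻¹' s) = volume s
      exact measure_preimage_add volume (↑g) s⟩
  have hfd := ZSpan.isAddFundamentalDomain b (volume : Measure (EuclideanSpace ℝ (Fin d)))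
  -- the essential support
  set T : Set (EuclideanSpace ℝ (Fin d)) := essSupp f with hT
  have hT0 : ∀ᵐ x, f x ≠ 0 → x ∈ T := ae_mem_essSupp f
  -- a.e. point is covered by a lattice translate of T
  rw [TilesAt, hset] at ht
  have hall : ∀ᵐ x, ∀ g : ↥(span ℤ (Set.range ⇑b)), f (x - ↑g) ≠ 0 → x - ↑g ∈ T :=
    ae_all_iff.mpr fun g =>
      (measurePreserving_sub_right volume (↑g)).quasiMeasurePreserving.ae hT0
  have hcov : ∀ᵐ x, ∃ g : ↥(span ℤ (Set.range ⇑b)), x ∈ g +ᵥ T := by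
    filter_upwards [ht, hall] with x hx hall'
    obtain ⟨hsum, htsum⟩ := hx
    by_contra hcon
    push_neg at hcon
    have hzero : ∀ l : ↥(↑(span ℤ (Set.range ⇑b)) : Set (EuclideanSpace ℝ (Fin d))),
        f (x - ↑l) = 0 := by
      intro l
      by_contra h0
      refine hcon ⟨↑l, l.2⟩ ?_
      have hmem : x - ↑l ∈ T := hall' ⟨↑l, l.2⟩ h0
      rw [Set.mem_vadd_set_iff_neg_vadd_mem]
      show -↑l + x ∈ T
      rwa [neg_add_eq_sub]
    apply hc
    rw [← htsum]
    rw [tsum_congr hzero]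
    exact tsum_zero
  -- conclude
  have hUc : volume (⋃ g : ↥(span ℤ (Set.range ⇑b)), (g +ᵥ T))ᶜ = 0 := by
    rw [ae_iff] at hcov
    refine measure_mono_null ?_ hcov
    intro x hx
    simp only [Set.mem_compl_iff, Set.mem_iUnion] at hx
    simpa using hx
  calc ENNReal.ofReal |A.det| = volume (ZSpan.fundamentalDomain b) := hvol.symm
    _ ≤ volume ((⋃ g : ↥(span ℤ (Set.range ⇑b)), ((g +ᵥ T) ∩ ZSpan.fundamentalDomain b)) ∪
          (⋃ g : ↥(span ℤ (Set.range ⇑b)), (g +ᵥ T))ᶜ) := by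
        apply measure_mono
        intro x hx
        by_cases hxU : x ∈ ⋃ g : ↥(span ℤ (Set.range ⇑b)), (g +ᵥ T)
        · obtain ⟨U, ⟨g, rfl⟩, hg⟩ := hxU
          exact Or.inl (Set.mem_iUnion.mpr ⟨g, hg, hx⟩)
        · exact Or.inr hxU
    _ ≤ volume (⋃ g : ↥(span ℤ (Set.range ⇑b)), ((g +ᵥ T) ∩ ZSpan.fundamentalDomain b)) +
          volume (⋃ g : ↥(span ℤ (Set.range ⇑b)), (g +ᵥ T))ᶜ := measure_union_le _ _
    _ = volume (⋃ g : ↥(span ℤ (Set.range ⇑b)), ((g +ᵥ T) ∩ ZSpan.fundamentalDomain b)) := by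
        rw [hUc, add_zero]
    _ ≤ ∑' g : ↥(span ℤ (Set.range ⇑b)), volume ((g +ᵥ T) ∩ ZSpan.fundamentalDomain b) :=
        measure_iUnion_le _
    _ = volume T := (hfd.measure_eq_tsum T).symm

end
end

section
/- Let E ⊆ ℝ² be a Lebesgue measurable set of finite measure such that for every rotation R ∈ SO(2) the indicator function 1_E tiles with the rotated lattice R(ℤ²) at level 1. Then the Fourier transform of 1_E vanishes at every nonzero point whose squared norm is a sum of two integer squares: 1̂_E(ξ) = 0 for every ξ ∈ ℝ² \ {0} with |ξ|² = m² + n² for some (m,n) ∈ ℤ² \ {(0,0)}. -/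
open MeasureTheory Convolution
open scoped RealInnerProductSpace FourierTransform ENNReal NNReal Pointwise

noncomputable section

abbrev E2 := EuclideanSpace ℝ (Fin 2)

set_option maxHeartbeats 2000000

/-- If `E ⊆ ℝ²` is measurable of finite measure and `1_E` tiles at
level 1 with every rotate `R(ℤ²)`, `R ∈ SO(2)`, then `∂1_E` vanishes at every nonzero
`ξ` with `|ξ|² = m² + n²` for some integers `(m,n) ≠ (0,0)`. -/
theorem steinhaus_fourier_vanishing
    (E : Set (EuclideanSpace ℝ (Fin 2))) (hE : MeasurableSet E) (hfin : volume E < ⊤)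
    (htile : ∀ R : Matrix (Fin 2) (Fin 2) ℝ, R * R.transpose = 1 → R.det = 1 →
      TilesAt (Set.indicator E fun _ => (1 : ℝ)) (latticeOf R) 1) :
    ∀ ξ : EuclideanSpace ℝ (Fin 2), ξ ≠ 0 →
      (∃ m n : ℤ, ‖ξ‖ ^ 2 = (m : ℝ) ^ 2 + (n : ℝ) ^ 2 ∧ ¬(m = 0 ∧ n = 0)) →
      FourierTransform.fourier (Set.indicator E fun _ => (1 : ℂ)) ξ = 0 := by
  classical
  rintro ξ hξ ⟨m, n, hmn, -⟩
  set f : E2 → ℝ := Set.indicator E fun _ => (1 : ℝ) with hf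
  set F : E2 → ℂ := Set.indicator E fun _ => (1 : ℂ) with hF
  have hFf : ∀ y, F y = ((f y : ℝ) : ℂ) := by
    intro y; by_cases h : y ∈ E <;> simp [hF, hf, h]
  obtain ⟨r2, hr2def⟩ : ∃ r : ℝ, r = ‖ξ‖ ^ 2 := ⟨_, rfl⟩
  have hmn' : r2 = (m:ℝ) ^ 2 + (n:ℝ) ^ 2 := by rw [hr2def]; exact hmn
  have hr2 : (0:ℝ) < r2 := by
    rw [hr2def]
    have : ‖ξ‖ ≠ 0 := norm_ne_zero_iff.2 hξ
    positivity
  have hcoord : ξ 0 ^ 2 + ξ 1 ^ 2 = r2 := by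
    rw [hr2def, EuclideanSpace.norm_eq, Real.sq_sqrt (by positivity)]
    simp [Fin.sum_univ_two, sq_abs]
  obtain ⟨a, ha⟩ : ∃ a : ℝ, a = ((m:ℝ) * ξ 0 + (n:ℝ) * ξ 1) / r2 := ⟨_, rfl⟩
  obtain ⟨b, hb⟩ : ∃ b : ℝ, b = ((m:ℝ) * ξ 1 - (n:ℝ) * ξ 0) / r2 := ⟨_, rfl⟩
  have hab : a ^ 2 + b ^ 2 = 1 := by
    rw [ha, hb]; field_simp
    linear_combination (-(ξ 0 ^ 2 + ξ 1 ^ 2)) * hmn' + r2 * hcoord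
  set R : Matrix (Fin 2) (Fin 2) ℝ := !![a, -b; b, a] with hR
  have hRT : R.transpose = !![a, b; -b, a] := by
    ext i j; fin_cases i <;> fin_cases j <;> rfl
  have hRO : R * R.transpose = 1 := by
    rw [hRT]
    ext i j
    fin_cases i <;> fin_cases j <;>
      simp [hR, Matrix.mul_apply, Fin.sum_univ_two, Matrix.one_apply] <;> nlinarith [hab]
  have hdet : R.det = 1 := by
    simp [hR, Matrix.det_fin_two]; linear_combination hab
  have ht := htile R hRO hdet
  -- the basis given by the columns of R
  set e : Module.Basis (Fin 2) ℝ E2 := (EuclideanSpace.basisFun (Fin 2) ℝ).toBasis with he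
  have hunit : IsUnit R.det := by rw [hdet]; exact isUnit_one
  set bR : Module.Basis (Fin 2) ℝ E2 := e.map (R.toLinearEquiv e hunit) with hbR
  have hbapp : ∀ i j, (bR i) j = R j i := by
    intro i j
    rw [hbR, Module.Basis.map_apply, Matrix.toLinearEquiv_apply, Matrix.toLin_self]
    have h1 : ∀ k : Fin 2, e k = EuclideanSpace.single k 1 := fun k => by
      simp [he, EuclideanSpace.basisFun_apply]
    simp_rw [h1]
    fin_cases i <;> fin_cases j <;>
      simp [Fin.sum_univ_two, EuclideanSpace.single_apply, PiLp.add_apply, PiLp.smul_apply, hR]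
  set L : AddSubgroup E2 := (Submodule.span ℤ (Set.range bR)).toAddSubgroup with hL
  have hmemL : ∀ x : E2, x ∈ L ↔ ∃ c : Fin 2 → ℤ, ∑ i, c i • bR i = x := by
    intro x
    rw [hL]
    exact Submodule.mem_span_range_iff_exists_fun ℤ
  have hlat : ∀ x : E2, x ∈ latticeOf R ↔ x ∈ L := by
    intro x
    rw [hmemL]
    constructor
    · rintro ⟨c, hcx⟩
      refine ⟨c, ?_⟩
      ext j
      rw [hcx]
      simp [Fin.sum_univ_two, PiLp.add_apply, PiLp.smul_apply, Matrix.mulVec,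
        dotProduct, hbapp, zsmul_eq_mul]
      ring
    · rintro ⟨c, rfl⟩
      refine ⟨c, ?_⟩
      ext j
      simp [Fin.sum_univ_two, PiLp.add_apply, PiLp.smul_apply, Matrix.mulVec,
        dotProduct, hbapp, zsmul_eq_mul]
      ring
  have hinner_apply : ∀ v : E2, ⟪v, ξ⟫ = v 0 * ξ 0 + v 1 * ξ 1 := fun v => by
    simp [PiLp.inner_apply, Fin.sum_univ_two]; ring
  have hinner0 : ⟪bR 0, ξ⟫ = (m:ℝ) := by
    rw [hinner_apply, hbapp, hbapp]
    have h00 : R 0 0 = a := rfl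
    have h10 : R 1 0 = b := rfl
    rw [h00, h10, ha, hb]
    field_simp
    linear_combination (m:ℝ) * hcoord
  have hinner1 : ⟪bR 1, ξ⟫ = (n:ℝ) := by
    rw [hinner_apply, hbapp, hbapp]
    have h01 : R 0 1 = -b := rfl
    have h11 : R 1 1 = a := rfl
    rw [h01, h11, ha, hb]
    field_simp
    linear_combination (n:ℝ) * hcoord
  -- inner products of lattice vectors with ξ are integers
  have hinner_int : ∀ y : E2, y ∈ L → ∃ k : ℤ, ⟪y, ξ⟫ = (k:ℝ) := by
    intro y hy
    obtain ⟨c, rfl⟩ := (hmemL y).1 hy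
    refine ⟨c 0 * m + c 1 * n, ?_⟩
    rw [Fin.sum_univ_two]
    rw [inner_add_left]
    rw [show (c 0 • bR 0 : E2) = ((c 0 : ℝ)) • bR 0 by rw [Int.cast_smul_eq_zsmul]]
    rw [show (c 1 • bR 1 : E2) = ((c 1 : ℝ)) • bR 1 by rw [Int.cast_smul_eq_zsmul]]
    rw [real_inner_smul_left, real_inner_smul_left, hinner0, hinner1]
    push_cast
    ring
  -- the character
  set c : E2 → ℂ := fun x => ((Real.fourierChar (-⟪x, ξ⟫) : Circle) : ℂ) with hc
  have hchar_int : ∀ (k : ℤ), ((Real.fourierChar ((k:ℝ)) : Circle) : ℂ) = 1 := by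
    intro k
    rw [Real.fourierChar_apply]
    rw [show 2 * Real.pi * (k:ℝ) = (k:ℝ) * (2 * Real.pi) by ring]
    convert Complex.exp_int_mul_two_pi_mul_I k using 2
    push_cast
    ring
  have hcper : ∀ y : E2, y ∈ L → ∀ x : E2, c (y + x) = c x := by
    intro y hy x
    obtain ⟨k, hk⟩ := hinner_int y hy
    rw [hc]
    simp only
    rw [inner_add_left, hk, neg_add, AddChar.map_add_eq_mul, Circle.coe_mul]
    rw [show (-(k:ℝ)) = ((-k : ℤ) : ℝ) by push_cast; ring, hchar_int]
    rw [one_mul]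
  -- fundamental domain
  set D : Set E2 := ZSpan.fundamentalDomain bR with hD
  haveI hcnt : Countable L := by
    have : Countable (Submodule.span ℤ (Set.range bR)) := inferInstance
    exact this
  have hfund : IsAddFundamentalDomain L D volume := ZSpan.isAddFundamentalDomain' bR volume
  -- integrability
  have hFint : Integrable F volume := by
    rw [hF, integrable_indicator_iff hE]
    exact integrableOn_const hfin.ne
  have hint : Integrable (fun v => c v * F v) volume := by
    have h0 : Integrable (fun v : E2 => (Real.fourierChar (-((innerₗ E2) v ξ)) : Circle) • F v)
        volume := by
      refine (VectorFourier.fourierIntegral_convergent_iff Real.continuous_fourierChar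
        ?_ ξ).2 hFint
      exact continuous_inner
    simpa [Circle.smul_def, hc] using h0
  -- step 1 : unfold Fourier integral and decompose into the fundamental domain
  have step0 : 𝓕 F ξ = ∫ v, c v * F v := by
    rw [Real.fourier_eq]
    simp_rw [Circle.smul_def]
    rfl
  have step1 : ∫ v, c v * F v = ∑' g : L, ∫ x in D, c ((g:E2) + x) * F ((g:E2) + x) :=
    hfund.integral_eq_tsum'' (fun v => c v * F v) hint
  -- step 2 : character is periodic
  have step2 : ∀ g : L, (fun x => c ((g:E2) + x) * F ((g:E2) + x))
      = fun x => c x * F ((g:E2) + x) := by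
    intro g; funext x; rw [hcper _ g.2]
  -- step 3 : swap sum and integral
  have hFm : Measurable F := measurable_const.indicator hE
  have hccont : Continuous c := by
    rw [hc]
    exact (Real.continuous_fourierChar.comp
      ((continuous_id.inner continuous_const).neg)).subtype_val
  have hmeas : ∀ g : L, AEStronglyMeasurable (fun x => c x * F ((g:E2) + x))
      (volume.restrict D) := by
    intro g
    exact (hccont.aestronglyMeasurable.mul
      ((hFm.comp (measurable_const_add (g:E2))).aestronglyMeasurable)).restrict
  have hnormF : ∀ y : E2, (‖F y‖₊ : ℝ≥0∞) = E.indicator (fun _ => (1:ℝ≥0∞)) y := by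
    intro y; by_cases h : y ∈ E <;> simp [hF, h]
  have hlintF : (∫⁻ y, (‖F y‖₊ : ℝ≥0∞)) = volume E := by
    simp_rw [hnormF]
    rw [lintegral_indicator hE]
    simp
  have hcnorm : ∀ x : E2, ‖c x‖₊ = 1 := by
    intro x
    have : ‖c x‖ = 1 := by
      rw [hc, Circle.norm_coe]
    ext
    rw [coe_nnnorm, this]
    rfl
  have hlint : (∑' g : L, ∫⁻ x in D, (‖c x * F ((g:E2) + x)‖₊ : ℝ≥0∞)) ≠ ⊤ := by
    have heq : ∀ g : L, (∫⁻ x in D, (‖c x * F ((g:E2) + x)‖₊ : ℝ≥0∞))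
        = ∫⁻ x in D, (‖F ((g:E2) + x)‖₊ : ℝ≥0∞) := by
      intro g
      refine lintegral_congr fun x => ?_
      rw [nnnorm_mul, hcnorm, one_mul]
    simp_rw [heq]
    have hsum : (∑' g : L, ∫⁻ x in D, (‖F ((g:E2) + x)‖₊ : ℝ≥0∞))
        = ∫⁻ y, (‖F y‖₊ : ℝ≥0∞) :=
      (hfund.lintegral_eq_tsum'' (fun y => (‖F y‖₊ : ℝ≥0∞))).symm
    rw [hsum, hlintF]
    exact hfin.ne
  have step3 : ∑' g : L, ∫ x in D, c x * F ((g:E2) + x)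
      = ∫ x in D, ∑' g : L, c x * F ((g:E2) + x) :=
    (integral_tsum hmeas hlint).symm
  -- step 4 : the periodization is 1 a.e.
  have hae : ∀ᵐ x : E2, (Summable fun g : L => f ((g:E2) + x)) ∧
      ∑' g : L, f ((g:E2) + x) = 1 := by
    let φ : L ≃ ↥(latticeOf R) :=
      { toFun := fun g => ⟨-(g:E2), (hlat _).2 (neg_mem g.2)⟩
        invFun := fun l => ⟨-(l:E2), neg_mem ((hlat _).1 l.2)⟩
        left_inv := fun g => by simp
        right_inv := fun l => by simp }
    filter_upwards [ht] with x hx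
    have hcomp : ∀ g : L, f (x - ((φ g : E2))) = f ((g:E2) + x) := by
      intro g
      show f (x - (-(g:E2))) = f ((g:E2) + x)
      rw [sub_neg_eq_add, add_comm]
    constructor
    · have := (φ.summable_iff (f := fun l : ↥(latticeOf R) => f (x - (l : E2)))).2 hx.1
      refine this.congr fun g => ?_
      exact hcomp g
    · rw [← hx.2, ← φ.tsum_eq (fun l : ↥(latticeOf R) => f (x - (l : E2)))]
      exact tsum_congr fun g => (hcomp g).symm
  have step4 : ∫ x in D, ∑' g : L, c x * F ((g:E2) + x) = ∫ x in D, c x := by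
    refine integral_congr_ae ?_
    filter_upwards [ae_restrict_of_ae hae] with x hx
    rw [tsum_mul_left]
    have : ∑' g : L, F ((g:E2) + x) = 1 := by
      simp_rw [hFf]
      rw [← Complex.ofReal_tsum, hx.2, Complex.ofReal_one]
    rw [this, mul_one]
  -- step 5 : the integral of the character over the fundamental domain vanishes
  have step5 : ∫ x in D, c x = 0 := by
    obtain ⟨v, hv⟩ : ∃ v : E2, v = (2 * r2)⁻¹ • ξ := ⟨_, rfl⟩
    have hvinner : ⟪v, ξ⟫ = 1/2 := by
      rw [hv, real_inner_smul_left, real_inner_self_eq_norm_sq, ← hr2def]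
      field_simp
    haveI : VAddCommClass E2 L E2 :=
      ⟨fun g l x => by
        show g + ((l:E2) + x) = (l:E2) + (g + x)
        abel⟩
    have hD' : IsAddFundamentalDomain L (v +ᵥ D) volume := hfund.vadd_of_comm v
    have hper' : ∀ (g : L) (x : E2), c ((g:E2) + x) = c x := fun g x => hcper _ g.2 x
    have h1 : ∫ x in D, c x = ∫ x in v +ᵥ D, c x := by
      refine hfund.setIntegral_eq hD' ?_
      exact hper'
    have h2 : ∫ x in v +ᵥ D, c x = ∫ x in D, c (v + x) := by
      rw [show v +ᵥ D = (fun x => v + x) '' D by rw [← Set.image_vadd]; rfl]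
      exact (measurePreserving_add_left volume v).setIntegral_image_emb
        (MeasurableEquiv.addLeft v).measurableEmbedding _ _
    have h3 : ∀ x : E2, c (v + x) = - c x := by
      intro x
      rw [hc]
      simp only
      rw [inner_add_left, hvinner, neg_add, AddChar.map_add_eq_mul, Circle.coe_mul]
      have : ((Real.fourierChar (-(1/2 : ℝ)) : Circle) : ℂ) = -1 := by
        rw [Real.fourierChar_apply]
        rw [show 2 * Real.pi * -(1/2 : ℝ) = -Real.pi by ring]
        rw [show ((-Real.pi : ℝ) : ℂ) * Complex.I = -(Real.pi * Complex.I) by push_cast; ring]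
        rw [Complex.exp_neg, Complex.exp_pi_mul_I]
        norm_num
      rw [this]
      ring
    have h4 : ∫ x in D, c (v + x) = - ∫ x in D, c x := by
      simp_rw [h3]
      exact integral_neg _
    have := h1.trans (h2.trans h4)
    linear_combination this / 2
  rw [show FourierTransform.fourier F ξ = 𝓕 F ξ from rfl, step0, step1]
  refine (tsum_congr fun g => ?_).trans (step3.trans (step4.trans step5))
  rw [step2 g]

end
end

section
/- (Erdős) The natural density of the set of positive integers having a divisor in the interval (N, 2N] tends to 0 as N → ∞: for every ε > 0 there exists N₀ such that for all N ≥ N₀, limsup_{x→∞} (1/x)·#{n ≤ x : ∃ m ∈ ℕ, N < m ≤ 2N, m ∣ n} < ε. -/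
open Filter Classical

namespace ErdosAux
open Finset

/-- The set of primes up to `2N`. -/
def PP (N : ℕ) : Finset ℕ := (Finset.range (2*N+1)).filter Nat.Prime

/-- `S_N = ∑_{p ≤ 2N} 1/p`. -/
noncomputable def SS (N : ℕ) : ℝ := ∑ p ∈ PP N, (1:ℝ)/p

/-- Number of primes `≤ 2N` dividing `m`. -/
def om (N m : ℕ) : ℕ := ((PP N).filter (· ∣ m)).card

lemma mem_PP {N p : ℕ} (hp : p ∈ PP N) : p.Prime ∧ p ≤ 2*N := by
  simp only [PP, mem_filter, mem_range] at hp
  exact ⟨hp.2, by omega⟩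

lemma SS_nonneg (N : ℕ) : 0 ≤ SS N :=
  Finset.sum_nonneg fun p _ => by positivity

lemma card_mult (a b k : ℕ) :
    (((Finset.Ioc a b).filter (k ∣ ·)).card : ℕ) = b / k - a / k := by
  by_cases hab : a ≤ b
  · have hu : (Finset.Ioc 0 a).filter (k ∣ ·) ∪ (Finset.Ioc a b).filter (k ∣ ·)
        = (Finset.Ioc 0 b).filter (k ∣ ·) := by
      rw [← Finset.filter_union, Finset.Ioc_union_Ioc_eq_Ioc (Nat.zero_le a) hab]
    have hd : Disjoint ((Finset.Ioc 0 a).filter (k ∣ ·)) ((Finset.Ioc a b).filter (k ∣ ·)) := by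
      refine Finset.disjoint_filter_filter ?_
      simp only [Finset.disjoint_left, Finset.mem_Ioc]
      rintro x ⟨_, h1⟩ ⟨h2, _⟩; omega
    have := Finset.card_union_of_disjoint hd
    rw [hu] at this
    rw [Nat.Ioc_filter_dvd_card_eq_div, Nat.Ioc_filter_dvd_card_eq_div] at this
    omega
  · rw [Finset.Ioc_eq_empty (fun h => hab h.le), Finset.filter_empty, Finset.card_empty]
    have := Nat.div_le_div_right (c := k) ((not_le.mp hab).le)
    omega

lemma om_eq_sum (N m : ℕ) : om N m = ∑ p ∈ PP N, if p ∣ m then 1 else 0 := by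
  rw [om, Finset.card_filter]

lemma first_moment (N a b : ℕ) :
    ∑ m ∈ Finset.Ioc a b, om N m = ∑ p ∈ PP N, (b / p - a / p) := by
  simp only [om_eq_sum]
  rw [Finset.sum_comm]
  refine Finset.sum_congr rfl fun p _ => ?_
  rw [← Finset.card_filter]
  exact card_mult a b p

lemma second_moment (N a b : ℕ) :
    ∑ m ∈ Finset.Ioc a b, (om N m)^2
      = ∑ p ∈ PP N, ∑ q ∈ PP N, (b / Nat.lcm p q - a / Nat.lcm p q) := by
  have h : ∀ m, (om N m)^2 = ∑ p ∈ PP N, ∑ q ∈ PP N, if Nat.lcm p q ∣ m then 1 else 0 := by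
    intro m
    rw [sq, om_eq_sum, Finset.sum_mul_sum]
    refine Finset.sum_congr rfl fun p _ => Finset.sum_congr rfl fun q _ => ?_
    simp only [Nat.lcm_dvd_iff, ite_zero_mul_ite_zero, mul_one]
  simp only [h]
  rw [Finset.sum_comm]
  refine Finset.sum_congr rfl fun p _ => ?_
  rw [Finset.sum_comm]
  refine Finset.sum_congr rfl fun q _ => ?_
  rw [← Finset.card_filter]
  exact card_mult a b _
lemma cast_div_le (k p : ℕ) : ((k/p : ℕ) : ℝ) ≤ (k:ℝ)/p := Nat.cast_div_le

lemma cast_div_ge (k p : ℕ) (hp : 0 < p) : (k:ℝ)/p - 1 ≤ ((k/p : ℕ) : ℝ) := by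
  have h1 : p * (k/p) + k % p = k := Nat.div_add_mod k p
  have h2 : k % p < p := Nat.mod_lt k hp
  have hp' : (0:ℝ) < p := by exact_mod_cast hp
  rw [sub_le_iff_le_add, div_le_iff₀ hp']
  have h1' : (p:ℝ) * ((k/p : ℕ):ℝ) + ((k % p : ℕ):ℝ) = k := by exact_mod_cast h1
  have h2' : ((k % p : ℕ):ℝ) < p := by exact_mod_cast h2
  nlinarith

lemma first_moment_lower (N a b : ℕ) (hab : a ≤ b) :
    ((b:ℝ) - a) * SS N - (PP N).card ≤ ∑ m ∈ Finset.Ioc a b, (om N m : ℝ) := by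
  have hfm : ∑ m ∈ Finset.Ioc a b, (om N m : ℝ) = ∑ p ∈ PP N, ((b/p - a/p : ℕ) : ℝ) := by
    exact_mod_cast congrArg (Nat.cast : ℕ → ℝ) (first_moment N a b)
  rw [hfm]
  have key : ((b:ℝ) - a) * SS N - (PP N).card
      = ∑ p ∈ PP N, (((b:ℝ) - a) * (1/p) - 1) := by
    rw [Finset.sum_sub_distrib, ← Finset.mul_sum, Finset.sum_const, nsmul_eq_mul, mul_one, SS]
  rw [key]
  refine Finset.sum_le_sum fun p hp => ?_
  · 
    have hp2 := (mem_PP hp).1.two_le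
    have hple : a/p ≤ b/p := Nat.div_le_div_right hab
    rw [Nat.cast_sub hple]
    have h1 := cast_div_ge b p (by omega)
    have h2 := cast_div_le a p
    have hp' : (0:ℝ) < p := by positivity
    have : ((b:ℝ) - a) * (1/p) = (b:ℝ)/p - (a:ℝ)/p := by ring
    linarith

lemma second_moment_upper (N a b : ℕ) (hab : a ≤ b) :
    ∑ m ∈ Finset.Ioc a b, (om N m : ℝ)^2
      ≤ ((b:ℝ) - a) * SS N^2 + 2 * b * SS N := by
  have hsm : ∑ m ∈ Finset.Ioc a b, (om N m : ℝ)^2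
      = ∑ p ∈ PP N, ∑ q ∈ PP N, ((b / Nat.lcm p q - a / Nat.lcm p q : ℕ) : ℝ) := by
    exact_mod_cast congrArg (Nat.cast : ℕ → ℝ) (second_moment N a b)
  rw [hsm]
  -- split diagonal and off-diagonal
  have hsplit : ∀ p ∈ PP N,
      ∑ q ∈ PP N, ((b / Nat.lcm p q - a / Nat.lcm p q : ℕ) : ℝ)
        = ((b / p - a / p : ℕ) : ℝ)
          + ∑ q ∈ (PP N).erase p, ((b / Nat.lcm p q - a / Nat.lcm p q : ℕ) : ℝ) := by
    intro p hp
    rw [← Finset.add_sum_erase _ _ hp, Nat.lcm_self]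
  rw [Finset.sum_congr rfl hsplit, Finset.sum_add_distrib]
  have hdiag : ∑ p ∈ PP N, ((b / p - a / p : ℕ) : ℝ) ≤ b * SS N := by
    rw [SS, Finset.mul_sum]
    refine Finset.sum_le_sum fun p hp => ?_
    have hp2 := (mem_PP hp).1.two_le
    have h1 : ((b / p - a / p : ℕ) : ℝ) ≤ ((b/p : ℕ) : ℝ) := by
      exact_mod_cast Nat.sub_le _ _
    have h2 := cast_div_le b p
    have hp' : (0:ℝ) < p := by positivity
    have : (b:ℝ) * (1/p) = (b:ℝ)/p := by ring
    linarith
  have hoff : ∀ p ∈ PP N,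
      ∑ q ∈ (PP N).erase p, ((b / Nat.lcm p q - a / Nat.lcm p q : ℕ) : ℝ)
        ≤ ((b:ℝ) - a) * (1/p) * SS N + (b:ℝ)/p := by
    intro p hp
    obtain ⟨hpp, _⟩ := mem_PP hp
    have hp2 := hpp.two_le
    have hp' : (0:ℝ) < p := by positivity
    have hterm : ∀ q ∈ (PP N).erase p,
        ((b / Nat.lcm p q - a / Nat.lcm p q : ℕ) : ℝ)
          ≤ ((b:ℝ) - a) * (1/p) * (1/q) + (if p * q ≤ b then (1:ℝ) else 0) := by
      intro q hq
      obtain ⟨hqne, hqP⟩ := Finset.mem_erase.mp hq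
      obtain ⟨hqp, _⟩ := mem_PP hqP
      have hq2 := hqp.two_le
      have hq' : (0:ℝ) < q := by positivity
      have hl : Nat.lcm p q = p * q :=
        Nat.Coprime.lcm_eq_mul ((Nat.coprime_primes hpp hqp).mpr (Ne.symm hqne))
      rw [hl]
      by_cases hb : p * q ≤ b
      · simp only [hb, if_true]
        have hple : a/(p*q) ≤ b/(p*q) := Nat.div_le_div_right hab
        rw [Nat.cast_sub hple]
        have h1 := cast_div_le b (p*q)
        have h2 := cast_div_ge a (p*q) (by positivity)
        have hpq' : (0:ℝ) < (p*q:ℕ) := by positivity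
        have he : ((b:ℝ) - a) * (1/p) * (1/q) = (b:ℝ)/(p*q:ℕ) - (a:ℝ)/(p*q:ℕ) := by
          push_cast; field_simp
        rw [he]
        push_cast at h1 h2 ⊢
        linarith
      · simp only [hb, if_false]
        have : b / (p*q) = 0 := Nat.div_eq_of_lt (by omega)
        rw [this, Nat.zero_sub]
        have : (0:ℝ) ≤ ((b:ℝ) - a) * (1/p) * (1/q) := by
          have : (0:ℝ) ≤ (b:ℝ) - a := by
            have : (a:ℝ) ≤ b := by exact_mod_cast hab
            linarith
          positivity
        simpa using this
    refine (Finset.sum_le_sum hterm).trans ?_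
    rw [Finset.sum_add_distrib]
    have h1 : ∑ q ∈ (PP N).erase p, ((b:ℝ) - a) * (1/p) * (1/q)
        ≤ ((b:ℝ) - a) * (1/p) * SS N := by
      rw [← Finset.mul_sum, SS]
      have hba : (0:ℝ) ≤ ((b:ℝ) - a) * (1/p) := by
        have : (a:ℝ) ≤ b := by exact_mod_cast hab
        have : (0:ℝ) ≤ (b:ℝ) - a := by linarith
        positivity
      refine mul_le_mul_of_nonneg_left ?_ hba
      refine Finset.sum_le_sum_of_subset_of_nonneg (Finset.erase_subset _ _)
        fun q hq _ => by positivity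
    have h2 : ∑ q ∈ (PP N).erase p, (if p * q ≤ b then (1:ℝ) else 0) ≤ (b:ℝ)/p := by
      rw [← Finset.sum_filter]
      refine le_trans (Finset.sum_le_sum_of_subset_of_nonneg (t := Finset.Icc 1 (b/p))
        ?_ (by intros; norm_num)) ?_
      · intro q hq
        obtain ⟨hq1, hq2⟩ := Finset.mem_filter.mp hq
        obtain ⟨_, hqP⟩ := Finset.mem_erase.mp hq1
        have := (mem_PP hqP).1.two_le
        refine Finset.mem_Icc.mpr ⟨by omega, ?_⟩
        rw [Nat.le_div_iff_mul_le (by omega : 0 < p), mul_comm]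
        exact hq2
      · rw [Finset.sum_const, Nat.card_Icc, nsmul_eq_mul, mul_one]
        calc ((b/p + 1 - 1 : ℕ) : ℝ) = ((b/p : ℕ) : ℝ) := by norm_num
          _ ≤ (b:ℝ)/p := cast_div_le b p
    linarith
  have hoffsum := Finset.sum_le_sum hoff
  have heval : ∑ p ∈ PP N, (((b:ℝ) - a) * (1/p) * SS N + (b:ℝ)/p)
      = ((b:ℝ) - a) * SS N * SS N + b * SS N := by
    have : ∀ p ∈ PP N, ((b:ℝ) - a) * (1/p) * SS N + (b:ℝ)/p
        = (((b:ℝ) - a) * SS N) * (1/p) + (b:ℝ) * (1/p) := fun p _ => by ring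
    rw [Finset.sum_congr rfl this, Finset.sum_add_distrib, ← Finset.mul_sum, ← Finset.mul_sum, SS]
  rw [heval] at hoffsum
  nlinarith [hdiag, hoffsum]
lemma var_bound (N a b : ℕ) (hab : a ≤ b) :
    ∑ m ∈ Finset.Ioc a b, ((om N m : ℝ) - SS N)^2
      ≤ 2 * b * SS N + 2 * SS N * (PP N).card := by
  have hexp : ∑ m ∈ Finset.Ioc a b, ((om N m : ℝ) - SS N)^2
      = (∑ m ∈ Finset.Ioc a b, (om N m : ℝ)^2)
        - 2 * SS N * (∑ m ∈ Finset.Ioc a b, (om N m : ℝ))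
        + ((b:ℝ) - a) * SS N^2 := by
    have h : ∀ m ∈ Finset.Ioc a b, ((om N m : ℝ) - SS N)^2
        = (om N m : ℝ)^2 - 2 * SS N * (om N m : ℝ) + SS N^2 := fun m _ => by ring
    rw [Finset.sum_congr rfl h, Finset.sum_add_distrib, Finset.sum_sub_distrib,
      ← Finset.mul_sum, Finset.sum_const, Nat.card_Ioc, nsmul_eq_mul]
    rw [Nat.cast_sub hab]
  rw [hexp]
  have h1 := first_moment_lower N a b hab
  have h2 := second_moment_upper N a b hab
  have h3 := mul_le_mul_of_nonneg_left h1 (by have := SS_nonneg N; linarith : (0:ℝ) ≤ 2 * SS N)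
  nlinarith [SS_nonneg N]

lemma tail_bound (N a b : ℕ) (hab : a ≤ b) (Δ : ℝ) (hΔ : 0 < Δ) :
    ((((Finset.Ioc a b).filter (fun m => Δ ≤ |(om N m : ℝ) - SS N|)).card : ℝ))
      ≤ (2 * b * SS N + 2 * SS N * (PP N).card) / Δ^2 := by
  rw [le_div_iff₀ (by positivity)]
  calc (((Finset.Ioc a b).filter (fun m => Δ ≤ |(om N m : ℝ) - SS N|)).card : ℝ) * Δ^2
      = ∑ _m ∈ (Finset.Ioc a b).filter (fun m => Δ ≤ |(om N m : ℝ) - SS N|), Δ^2 := by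
        rw [Finset.sum_const, nsmul_eq_mul]
    _ ≤ ∑ m ∈ (Finset.Ioc a b).filter (fun m => Δ ≤ |(om N m : ℝ) - SS N|),
          ((om N m : ℝ) - SS N)^2 := by
        refine Finset.sum_le_sum fun m hm => ?_
        have := (Finset.mem_filter.mp hm).2
        calc Δ^2 ≤ |(om N m : ℝ) - SS N|^2 := by
              exact pow_le_pow_left₀ hΔ.le this 2
          _ = ((om N m : ℝ) - SS N)^2 := sq_abs _
    _ ≤ ∑ m ∈ Finset.Ioc a b, ((om N m : ℝ) - SS N)^2 := by
        refine Finset.sum_le_sum_of_subset_of_nonneg (Finset.filter_subset _ _)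
          fun m _ _ => by positivity
    _ ≤ 2 * b * SS N + 2 * SS N * (PP N).card := var_bound N a b hab

noncomputable def T1 (N x : ℕ) : Finset ℕ :=
  (Finset.Ioc 0 x).filter (fun n => SS N/8 ≤ |(om N n : ℝ) - SS N|)
noncomputable def Asq (N w x : ℕ) : Finset ℕ :=
  (Finset.Ioc 0 x).filter (fun n => ∃ p ∈ PP N, w < p ∧ p*p ∣ n)
noncomputable def Db (N : ℕ) : Finset ℕ :=
  (Finset.Ioc N (2*N)).filter (fun d => SS N/4 ≤ |(om N d : ℝ) - SS N|)
noncomputable def Ab (N x : ℕ) : Finset ℕ :=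
  (Finset.Ioc 0 x).filter (fun n => ∃ d ∈ Db N, d ∣ n)
noncomputable def Ac (N x : ℕ) : Finset ℕ :=
  (Finset.Ioc 0 x).filter
    (fun n => ∃ d ∈ Finset.Ioc N (2*N), d ∣ n ∧ (om N (n/d) : ℝ) ≤ SS N/2)
noncomputable def A0 (N x : ℕ) : Finset ℕ :=
  (Finset.Ioc 0 x).filter (fun n => ∃ m ∈ Finset.Ioc N (2*N), m ∣ n)

lemma cover (N w x : ℕ) (hwS : 8*(w:ℝ) ≤ SS N) :
    A0 N x ⊆ T1 N x ∪ Asq N w x ∪ Ab N x ∪ Ac N x := by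
  intro n hn
  simp only [A0, Finset.mem_filter] at hn
  obtain ⟨hmem', d, hd, hdvd⟩ := hn
  have hmem : 0 < n ∧ n ≤ x := Finset.mem_Ioc.mp hmem'
  simp only [Finset.mem_union]
  by_cases h1 : n ∈ T1 N x
  · tauto
  by_cases h2 : n ∈ Asq N w x
  · tauto
  by_cases h3 : n ∈ Ab N x
  · tauto
  refine Or.inr ?_
  simp only [Ac, Finset.mem_filter]
  refine ⟨hmem', d, hd, hdvd, ?_⟩
  have hT1 : |(om N n : ℝ) - SS N| < SS N/8 := by
    by_contra hc
    refine h1 ?_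
    simp only [T1, Finset.mem_filter]
    exact ⟨hmem', not_lt.mp hc⟩
  have hDb : |(om N d : ℝ) - SS N| < SS N/4 := by
    by_contra hc
    refine h3 ?_
    simp only [Ab, Db, Finset.mem_filter]
    exact ⟨hmem', d, ⟨hd, not_lt.mp hc⟩, hdvd⟩
  set X := (PP N).filter (· ∣ d) with hX
  set Y := (PP N).filter (· ∣ (n/d)) with hY
  have hXY : X ∪ Y ⊆ (PP N).filter (· ∣ n) := by
    intro p hp
    rcases Finset.mem_union.mp hp with hpX | hpY
    · obtain ⟨hpP, hpd⟩ := Finset.mem_filter.mp hpX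
      exact Finset.mem_filter.mpr ⟨hpP, hpd.trans hdvd⟩
    · obtain ⟨hpP, hpm⟩ := Finset.mem_filter.mp hpY
      refine Finset.mem_filter.mpr ⟨hpP, hpm.trans ⟨d, ?_⟩⟩
      exact (Nat.div_mul_cancel hdvd).symm
  have hcap : X ∩ Y ⊆ Finset.Icc 1 w := by
    intro p hp
    obtain ⟨hpX, hpY⟩ := Finset.mem_inter.mp hp
    obtain ⟨hpP, hpd⟩ := Finset.mem_filter.mp hpX
    obtain ⟨_, hpm⟩ := Finset.mem_filter.mp hpY
    have hpp : p * p ∣ n := by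
      have hdm : d * (n/d) = n := Nat.mul_div_cancel' hdvd
      calc p * p ∣ d * (n/d) := mul_dvd_mul hpd hpm
        _ = n := hdm
    have hple : p ≤ w := by
      by_contra hc
      refine h2 ?_
      simp only [Asq, Finset.mem_filter]
      exact ⟨hmem', p, hpP, by omega, hpp⟩
    have := (mem_PP hpP).1.two_le
    exact Finset.mem_Icc.mpr ⟨by omega, hple⟩
  have hcard : om N d + om N (n/d) ≤ om N n + w := by
    have h4 : (X ∪ Y).card + (X ∩ Y).card = X.card + Y.card :=
      Finset.card_union_add_card_inter X Y
    have h5 : (X ∪ Y).card ≤ om N n := Finset.card_le_card hXY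
    have h6 : (X ∩ Y).card ≤ w := by
      have := Finset.card_le_card hcap
      rwa [Nat.card_Icc, Nat.add_sub_cancel] at this
    have e1 : X.card = om N d := rfl
    have e2 : Y.card = om N (n/d) := rfl
    omega
  have hcast : (om N d : ℝ) + (om N (n/d) : ℝ) ≤ (om N n : ℝ) + w := by exact_mod_cast hcard
  have hup : (om N n : ℝ) < SS N + SS N/8 := by
    have := abs_lt.mp hT1
    linarith [this.2]
  have hlo : SS N - SS N/4 < (om N d : ℝ) := by
    have := abs_lt.mp hDb
    linarith [this.1]
  linarith
lemma pc_le (N : ℕ) (hN : 1 ≤ N) : ((PP N).card : ℝ) ≤ 3*N := by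
  have h1 : (PP N).card ≤ 2*N+1 := by
    calc (PP N).card ≤ (Finset.range (2*N+1)).card := Finset.card_le_card (Finset.filter_subset _ _)
      _ = 2*N+1 := Finset.card_range _
  have : (2*N+1 : ℕ) ≤ 3*N := by omega
  exact_mod_cast le_trans h1 this

lemma SS_pos (N : ℕ) (hS1 : 1 ≤ SS N) : 0 < SS N := lt_of_lt_of_le one_pos hS1

lemma T1_card (N x : ℕ) (hN : 1 ≤ N) (hS1 : 1 ≤ SS N) :
    ((T1 N x).card : ℝ) ≤ 128 * x / SS N + 384 * N := by
  have hS0 := SS_pos N hS1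
  have h := tail_bound N 0 x (Nat.zero_le x) (SS N/8) (by positivity)
  have hpc := pc_le N hN
  calc ((T1 N x).card : ℝ)
      ≤ (2 * x * SS N + 2 * SS N * (PP N).card) / (SS N/8)^2 := h
    _ = 128 * x / SS N + 128 * ((PP N).card : ℝ) / SS N := by field_simp; ring
    _ ≤ 128 * x / SS N + 128 * ((PP N).card : ℝ) := by
        have : 128 * ((PP N).card : ℝ) / SS N ≤ 128 * ((PP N).card : ℝ) := by
          apply div_le_self (by positivity) hS1
        linarith
    _ ≤ 128 * x / SS N + 384 * N := by linarith

lemma Asq_card (N w x : ℕ) (hw : 1 ≤ w) :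
    ((Asq N w x).card : ℝ) ≤ (x:ℝ) / w := by
  have hsub : Asq N w x ⊆ ((PP N).filter (w < ·)).biUnion
      (fun p => (Finset.Ioc 0 x).filter (p*p ∣ ·)) := by
    intro n hn
    simp only [Asq, Finset.mem_filter] at hn
    obtain ⟨hmem, p, hpP, hwp, hpp⟩ := hn
    refine Finset.mem_biUnion.mpr ⟨p, Finset.mem_filter.mpr ⟨hpP, hwp⟩, ?_⟩
    exact Finset.mem_filter.mpr ⟨hmem, hpp⟩
  have h1 : ((Asq N w x).card : ℝ)
      ≤ ∑ p ∈ (PP N).filter (w < ·), (((Finset.Ioc 0 x).filter (p*p ∣ ·)).card : ℝ) := by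
    exact_mod_cast (Finset.card_le_card hsub).trans (Finset.card_biUnion_le)
  refine h1.trans ?_
  have h2 : ∀ p ∈ (PP N).filter (w < ·),
      (((Finset.Ioc 0 x).filter (p*p ∣ ·)).card : ℝ) ≤ (x:ℝ) * (((p:ℝ)^2)⁻¹) := by
    intro p hp
    obtain ⟨hpP, hwp⟩ := Finset.mem_filter.mp hp
    have h2le := (mem_PP hpP).1.two_le
    rw [card_mult 0 x (p*p)]
    have : (x : ℕ) / (p*p) - 0/(p*p) = x/(p*p) := by simp
    rw [this]
    calc ((x/(p*p) : ℕ) : ℝ) ≤ (x:ℝ)/((p*p : ℕ):ℝ) := cast_div_le x (p*p)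
      _ = (x:ℝ) * (((p:ℝ)^2)⁻¹) := by push_cast; rw [div_eq_mul_inv, sq]
  refine (Finset.sum_le_sum h2).trans ?_
  rw [← Finset.mul_sum]
  have h3 : ∑ p ∈ (PP N).filter (w < ·), (((p:ℝ)^2)⁻¹) ≤ 1/(w:ℝ) := by
    have hsub2 : (PP N).filter (w < ·) ⊆ Finset.Ioc w (2*N) := by
      intro p hp
      obtain ⟨hpP, hwp⟩ := Finset.mem_filter.mp hp
      exact Finset.mem_Ioc.mpr ⟨hwp, (mem_PP hpP).2⟩
    refine (Finset.sum_le_sum_of_subset_of_nonneg hsub2 (fun p _ _ => by positivity)).trans ?_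
    by_cases hw2N : w ≤ 2*N
    · have := sum_Ioc_inv_sq_le_sub (α := ℝ) (by omega : w ≠ 0) hw2N
      have h2N : (0:ℝ) ≤ ((2*N : ℕ):ℝ)⁻¹ := by positivity
      calc ∑ i ∈ Finset.Ioc w (2*N), (((i:ℝ))^2)⁻¹ ≤ (w:ℝ)⁻¹ - ((2*N : ℕ):ℝ)⁻¹ := by
            exact_mod_cast this
        _ ≤ 1/(w:ℝ) := by rw [one_div]; linarith
    · rw [Finset.Ioc_eq_empty (by omega)]
      simp only [Finset.sum_empty]
      positivity
  calc (x:ℝ) * ∑ p ∈ (PP N).filter (w < ·), (((p:ℝ)^2)⁻¹)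
      ≤ (x:ℝ) * (1/w) := by
        refine mul_le_mul_of_nonneg_left h3 (by positivity)
    _ = (x:ℝ)/w := by ring

lemma cast_xd_le (x d N : ℕ) (hN : 1 ≤ N) (hd : N < d) : ((x/d : ℕ) : ℝ) ≤ (x:ℝ)/N := by
  refine (cast_div_le x d).trans ?_
  refine div_le_div_of_nonneg_left (by positivity) (by exact_mod_cast hN) ?_
  exact_mod_cast hd.le

lemma Db_card (N : ℕ) (hN : 1 ≤ N) (hS1 : 1 ≤ SS N) :
    ((Db N).card : ℝ) ≤ 160 * N / SS N := by
  have hS0 := SS_pos N hS1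
  have hpc := pc_le N hN
  have h := tail_bound N N (2*N) (by omega) (SS N/4) (by positivity)
  calc ((Db N).card : ℝ)
      ≤ (2 * (2*N : ℕ) * SS N + 2 * SS N * (PP N).card) / (SS N/4)^2 := h
    _ = (64 * (N:ℝ) + 32 * ((PP N).card : ℝ)) / SS N := by push_cast; field_simp; ring
    _ ≤ (160 * (N:ℝ)) / SS N := by
        gcongr ?_ / SS N
        linarith
    _ = 160 * N / SS N := by ring

lemma Ab_card (N x : ℕ) (hN : 1 ≤ N) (hS1 : 1 ≤ SS N) :
    ((Ab N x).card : ℝ) ≤ 160 * x / SS N := by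
  have hS0 := SS_pos N hS1
  have hsub : Ab N x ⊆ (Db N).biUnion (fun d => (Finset.Ioc 0 x).filter (d ∣ ·)) := by
    intro n hn
    simp only [Ab, Finset.mem_filter] at hn
    obtain ⟨hmem, d, hdD, hdvd⟩ := hn
    exact Finset.mem_biUnion.mpr ⟨d, hdD, Finset.mem_filter.mpr ⟨hmem, hdvd⟩⟩
  have h1 : ((Ab N x).card : ℝ)
      ≤ ∑ d ∈ Db N, (((Finset.Ioc 0 x).filter (d ∣ ·)).card : ℝ) := by
    exact_mod_cast (Finset.card_le_card hsub).trans Finset.card_biUnion_le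
  have h2 : ∀ d ∈ Db N, (((Finset.Ioc 0 x).filter (d ∣ ·)).card : ℝ) ≤ (x:ℝ)/N := by
    intro d hd
    have hdIoc : d ∈ Finset.Ioc N (2*N) := Finset.mem_filter.mp hd |>.1
    have hNd : N < d := (Finset.mem_Ioc.mp hdIoc).1
    rw [card_mult 0 x d]
    have : x / d - 0/d = x/d := by simp
    rw [this]
    exact cast_xd_le x d N hN hNd
  have h3 := Finset.sum_le_sum h2
  refine h1.trans (h3.trans ?_)
  rw [Finset.sum_const, nsmul_eq_mul]
  calc ((Db N).card : ℝ) * ((x:ℝ)/N)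
      ≤ (160 * N / SS N) * ((x:ℝ)/N) := by
        refine mul_le_mul_of_nonneg_right (Db_card N hN hS1) (by positivity)
    _ = 160 * x / SS N := by
        field_simp

lemma Ac_card (N x : ℕ) (hN : 1 ≤ N) (hS1 : 1 ≤ SS N) :
    ((Ac N x).card : ℝ) ≤ 8 * x / SS N + 24 * (N:ℝ)^2 := by
  have hS0 := SS_pos N hS1
  have hpc := pc_le N hN
  have hsub : Ac N x ⊆ (Finset.Ioc N (2*N)).biUnion
      (fun d => (Finset.Ioc 0 x).filter (fun n => d ∣ n ∧ (om N (n/d) : ℝ) ≤ SS N/2)) := by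
    intro n hn
    simp only [Ac, Finset.mem_filter] at hn
    obtain ⟨hmem, d, hdI, hdvd, hom⟩ := hn
    exact Finset.mem_biUnion.mpr ⟨d, hdI, Finset.mem_filter.mpr ⟨hmem, hdvd, hom⟩⟩
  have h1 : ((Ac N x).card : ℝ)
      ≤ ∑ d ∈ Finset.Ioc N (2*N),
          (((Finset.Ioc 0 x).filter (fun n => d ∣ n ∧ (om N (n/d) : ℝ) ≤ SS N/2)).card : ℝ) := by
    exact_mod_cast (Finset.card_le_card hsub).trans Finset.card_biUnion_le
  have h2 : ∀ d ∈ Finset.Ioc N (2*N),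
      (((Finset.Ioc 0 x).filter (fun n => d ∣ n ∧ (om N (n/d) : ℝ) ≤ SS N/2)).card : ℝ)
        ≤ 8 * ((x:ℝ)/N) / SS N + 24 * N := by
    intro d hdI
    have hNd : N < d := (Finset.mem_Ioc.mp hdI).1
    have hd0 : 0 < d := by omega
    -- inject into the tail set at level x/d
    have hinj : (((Finset.Ioc 0 x).filter (fun n => d ∣ n ∧ (om N (n/d) : ℝ) ≤ SS N/2)).card)
        ≤ (((Finset.Ioc 0 (x/d)).filter (fun m => SS N/2 ≤ |(om N m : ℝ) - SS N|)).card) := by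
      refine Finset.card_le_card_of_injOn (fun n => n/d) ?_ ?_
      · intro n hn
        simp only [Finset.coe_filter, Set.mem_setOf_eq, Finset.mem_coe, Finset.mem_filter, Finset.mem_Ioc] at hn ⊢
        obtain ⟨⟨hn0, hnx⟩, hdvd, hom⟩ := hn
        refine ⟨⟨Nat.div_pos (Nat.le_of_dvd hn0 hdvd) hd0, Nat.div_le_div_right hnx⟩, ?_⟩
        have habs : SS N - (om N (n/d) : ℝ) ≤ |(om N (n/d) : ℝ) - SS N| := by
          rw [abs_sub_comm]
          exact le_abs_self _
        linarith
      · intro n1 hn1 n2 hn2 heq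
        simp only [Finset.coe_filter, Set.mem_setOf_eq] at hn1 hn2
        obtain ⟨_, hd1, _⟩ := hn1
        obtain ⟨_, hd2, _⟩ := hn2
        have heq' : n1 / d = n2 / d := heq
        calc n1 = n1/d * d := (Nat.div_mul_cancel hd1).symm
          _ = n2/d * d := by rw [heq']
          _ = n2 := Nat.div_mul_cancel hd2
    calc (((Finset.Ioc 0 x).filter (fun n => d ∣ n ∧ (om N (n/d) : ℝ) ≤ SS N/2)).card : ℝ)
        ≤ (((Finset.Ioc 0 (x/d)).filter (fun m => SS N/2 ≤ |(om N m : ℝ) - SS N|)).card : ℝ) := by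
          exact_mod_cast hinj
      _ ≤ (2 * (x/d : ℕ) * SS N + 2 * SS N * (PP N).card) / (SS N/2)^2 :=
          tail_bound N 0 (x/d) (Nat.zero_le _) (SS N/2) (by positivity)
      _ = (8 * ((x/d : ℕ) : ℝ) + 8 * ((PP N).card : ℝ)) / SS N := by field_simp; ring
      _ ≤ (8 * ((x:ℝ)/N) + 8 * (3*(N:ℝ))) / SS N := by
          have hcd := cast_xd_le x d N hN hNd
          gcongr ?_ / SS N
          gcongr <;> assumption
      _ = 8 * ((x:ℝ)/N) / SS N + (24*(N:ℝ)) / SS N := by ring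
      _ ≤ 8 * ((x:ℝ)/N) / SS N + 24 * N := by
          have : (24*(N:ℝ)) / SS N ≤ 24*(N:ℝ) := div_le_self (by positivity) hS1
          linarith
  have h3 := Finset.sum_le_sum h2
  refine h1.trans (h3.trans ?_)
  rw [Finset.sum_const, nsmul_eq_mul, Nat.card_Ioc]
  have hcard : ((2*N - N : ℕ) : ℝ) = (N:ℝ) := by
    have : 2*N - N = N := by omega
    rw [this]
  rw [hcard]
  have hN0 : (0:ℝ) < (N:ℝ) := by exact_mod_cast hN
  have hEq : (N:ℝ) * (8 * ((x:ℝ)/N) / SS N + 24 * N) = 8 * x / SS N + 24*(N:ℝ)^2 := by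
    field_simp
  rw [hEq]
lemma master (N w x : ℕ) (hN : 1 ≤ N) (hw : 1 ≤ w) (hS1 : 1 ≤ SS N)
    (hwS : 8*(w:ℝ) ≤ SS N) :
    (((Finset.Icc 1 x).filter fun n => ∃ m ∈ Finset.Ioc N (2 * N), m ∣ n).card : ℝ)
      ≤ (x:ℝ) * (296/SS N + 1/w) + 500*(N:ℝ)^2 := by
  have hA0 : ((Finset.Icc 1 x).filter fun n => ∃ m ∈ Finset.Ioc N (2 * N), m ∣ n)
      ⊆ A0 N x := by
    intro n hn
    simp only [Finset.mem_filter, Finset.mem_Icc] at hn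
    simp only [A0, Finset.mem_filter]
    exact ⟨Finset.mem_Ioc.mpr ⟨by omega, hn.1.2⟩, hn.2⟩
  have h1 : (((Finset.Icc 1 x).filter fun n => ∃ m ∈ Finset.Ioc N (2 * N), m ∣ n).card)
      ≤ (T1 N x).card + (Asq N w x).card + (Ab N x).card + (Ac N x).card := by
    calc (((Finset.Icc 1 x).filter fun n => ∃ m ∈ Finset.Ioc N (2 * N), m ∣ n).card)
        ≤ (A0 N x).card := Finset.card_le_card hA0
      _ ≤ (T1 N x ∪ Asq N w x ∪ Ab N x ∪ Ac N x).card :=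
          Finset.card_le_card (cover N w x hwS)
      _ ≤ (T1 N x ∪ Asq N w x ∪ Ab N x).card + (Ac N x).card := Finset.card_union_le _ _
      _ ≤ (T1 N x ∪ Asq N w x).card + (Ab N x).card + (Ac N x).card :=
          Nat.add_le_add_right (Finset.card_union_le _ _) _
      _ ≤ (T1 N x).card + (Asq N w x).card + (Ab N x).card + (Ac N x).card := by
          have := Finset.card_union_le (T1 N x) (Asq N w x)
          omega
  have h1' : (((Finset.Icc 1 x).filter fun n => ∃ m ∈ Finset.Ioc N (2 * N), m ∣ n).card : ℝ)
      ≤ ((T1 N x).card : ℝ) + (Asq N w x).card + (Ab N x).card + (Ac N x).card := by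
    exact_mod_cast h1
  have hS0 := SS_pos N hS1
  have hN0 : (1:ℝ) ≤ (N:ℝ) := by exact_mod_cast hN
  have hNN : (N:ℝ) ≤ (N:ℝ)^2 := by nlinarith
  have hB := T1_card N x hN hS1
  have hC := Asq_card N w x hw
  have hD := Ab_card N x hN hS1
  have hE := Ac_card N x hN hS1
  have hexp : (x:ℝ) * (296/SS N + 1/w)
      = 128 * x / SS N + (x:ℝ)/w + 160 * x / SS N + 8 * x / SS N := by
    field_simp
    ring
  rw [hexp]
  linarith

lemma SS_tendsto : Tendsto (fun N => SS N) atTop atTop := by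
  have hnonneg : ∀ n : ℕ, 0 ≤ Set.indicator {p | Nat.Prime p} (fun n : ℕ => (1:ℝ)/n) n :=
    fun n => Set.indicator_nonneg (fun p _ => by positivity) n
  have hdiv : Tendsto (fun k => ∑ i ∈ Finset.range k,
      Set.indicator {p | Nat.Prime p} (fun n : ℕ => (1:ℝ)/n) i) atTop atTop :=
    (not_summable_iff_tendsto_nat_atTop_of_nonneg hnonneg).mp not_summable_one_div_on_primes
  have hSSeq : ∀ N, SS N = ∑ i ∈ Finset.range (2*N+1),
      Set.indicator {p | Nat.Prime p} (fun n : ℕ => (1:ℝ)/n) i := by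
    intro N
    rw [SS, PP, Finset.sum_filter]
    exact Finset.sum_congr rfl fun i _ => by simp [Set.indicator_apply]
  have hcomp : Tendsto (fun N : ℕ => 2*N+1) atTop atTop := by
    apply tendsto_atTop_mono (fun n : ℕ => by omega : ∀ n : ℕ, n ≤ 2*n+1) tendsto_id
  have := hdiv.comp hcomp
  exact Tendsto.congr (fun N => (hSSeq N).symm) this
end ErdosAux

open ErdosAux

/-- **Erdős.** The natural density of the set of positive integers having
a divisor in `(N, 2N]` tends to 0 as `N → ∞`: for every `ε > 0` there is `N₀` such that
for all `N ≥ N₀` the upper density of `{n : ∃ m, N < m ≤ 2N, m ∣ n}` is less than `ε`. -/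
theorem erdos_density_of_divisors_in_dyadic_interval :
    ∀ ε : ℝ, 0 < ε → ∃ N₀ : ℕ, ∀ N : ℕ, N₀ ≤ N →
      Filter.limsup
        (fun x : ℕ =>
          (((Finset.Icc 1 x).filter fun n => ∃ m ∈ Finset.Ioc N (2 * N), m ∣ n).card : ℝ)
            / x)
        Filter.atTop < ε := by
  intro ε hε
  -- choose w with 1/w ≤ ε/4
  obtain ⟨w0, hw0⟩ := exists_nat_ge (4/ε)
  set w : ℕ := max w0 1 with hw
  have hw1 : 1 ≤ w := le_max_right _ _
  have hwpos : (0:ℝ) < w := by exact_mod_cast hw1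
  have hwε : (1:ℝ)/w ≤ ε/4 := by
    have h4 : (4:ℝ)/ε ≤ w := le_trans hw0 (by exact_mod_cast le_max_left w0 1)
    rw [div_le_div_iff₀ hwpos (by positivity : (0:ℝ) < 4)]
    calc (1:ℝ) * 4 = 4 := by ring
      _ ≤ ε * ((4:ℝ)/ε) := by rw [mul_div_cancel₀]; positivity
      _ ≤ ε * w := by nlinarith
  -- choose N₀
  have hev : ∀ᶠ N in atTop, max (8*(w:ℝ)) (max 1 (1184/ε)) ≤ SS N :=
    SS_tendsto.eventually_ge_atTop _
  obtain ⟨N₁, hN₁⟩ := eventually_atTop.mp hev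
  refine ⟨max N₁ 1, fun N hN => ?_⟩
  have hN1 : 1 ≤ N := le_trans (le_max_right _ _) hN
  have hSS := hN₁ N (le_trans (le_max_left _ _) hN)
  have hS1 : 1 ≤ SS N := le_trans (le_trans (le_max_left _ _) (le_max_right _ _)) hSS
  have hwS : 8*(w:ℝ) ≤ SS N := le_trans (le_max_left _ _) hSS
  have hSε : 1184/ε ≤ SS N := le_trans (le_trans (le_max_right _ _) (le_max_right _ _)) hSS
  have hS0 : (0:ℝ) < SS N := lt_of_lt_of_le one_pos hS1
  -- the main B bound
  have hB : 296/SS N + 1/w ≤ ε/2 := by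
    have h296 : 296/SS N ≤ ε/4 := by
      rw [div_le_iff₀ hS0]
      have hεd : (0:ℝ) < 1184/ε := by positivity
      calc (296:ℝ) = ε/4 * (1184/ε) := by field_simp; ring
        _ ≤ ε/4 * SS N := by nlinarith
    linarith
  -- eventual bound
  set C : ℝ := 500*(N:ℝ)^2 with hC
  have hCpos : 0 ≤ C := by positivity
  obtain ⟨x₀, hx₀⟩ := exists_nat_ge (C * (4/ε) + 1)
  have hfin : ∀ᶠ (x:ℕ) in atTop,
      (((Finset.Icc 1 x).filter fun n => ∃ m ∈ Finset.Ioc N (2 * N), m ∣ n).card : ℝ) / x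
        ≤ 3*ε/4 := by
    filter_upwards [eventually_ge_atTop x₀] with x hx
    have hxR : C * (4/ε) + 1 ≤ (x:ℝ) := le_trans hx₀ (by exact_mod_cast hx)
    have hx0 : (0:ℝ) < x := by nlinarith [mul_nonneg hCpos (by positivity : (0:ℝ) ≤ 4/ε)]
    have hmaster := master N w x hN1 hw1 hS1 hwS
    have hCx : C / x ≤ ε/4 := by
      rw [div_le_iff₀ hx0]
      have : C = ε/4 * (C * (4/ε)) := by field_simp
      nlinarith [mul_nonneg hCpos (by positivity : (0:ℝ) ≤ 4/ε)]
    calc (((Finset.Icc 1 x).filter fun n => ∃ m ∈ Finset.Ioc N (2 * N), m ∣ n).card : ℝ) / x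
        ≤ ((x:ℝ) * (296/SS N + 1/w) + C) / x := by
          gcongr
      _ = (296/SS N + 1/w) + C/x := by field_simp
      _ ≤ ε/2 + ε/4 := add_le_add hB hCx
      _ = 3*ε/4 := by ring
  have hcob : Filter.IsCoboundedUnder (· ≤ ·) Filter.atTop
      (fun x : ℕ =>
        (((Finset.Icc 1 x).filter fun n => ∃ m ∈ Finset.Ioc N (2 * N), m ∣ n).card : ℝ) / x) := by
    refine isCoboundedUnder_le_of_le Filter.atTop (x := 0) fun x => by positivity
  have hlim := Filter.limsup_le_of_le hcob hfin
  calc Filter.limsup _ Filter.atTop ≤ 3*ε/4 := hlim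
    _ < ε := by linarith
end

section
/- For every ε > 0 there is a constant c_ε > 0 such that for every N ≥ 1 the union of the arithmetic progressions ((N+j)/N)·ℤ, j = 1, …, N, contains at least c_ε · N^{2−ε} points in the interval [0, 2N]: #( [0, 2N] ∩ ⋃_{j=1}^{N} {k(N+j)/N : k ∈ ℤ} ) ≥ c_ε · N^{2−ε}. -/
lemma exp_ge_sq_div_four {x : ℝ} (hx : 0 ≤ x) : x^2/4 ≤ Real.exp x := by
  have h1 : x/2 + 1 ≤ Real.exp (x/2) := Real.add_one_le_exp (x/2)
  have h2 : (x/2 + 1)^2 ≤ (Real.exp (x/2))^2 := by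
    apply pow_le_pow_left₀ (by positivity) h1
  have h3 : (Real.exp (x/2))^2 = Real.exp x := by
    rw [← Real.exp_nat_mul]; ring_nf
  nlinarith [h2, h3]

lemma per_prime_bound {ε : ℝ} (hε : 0 < ε) :
    ∃ C : ℝ, 1 ≤ C ∧ ∀ a : ℕ, (a + 1 : ℝ) ≤ C * (2 : ℝ) ^ (ε * a) := by
  have hlog2 : 0 < Real.log 2 := Real.log_pos (by norm_num)
  set L := ε * Real.log 2 with hL
  have hLpos : 0 < L := by positivity
  obtain ⟨a₀, ha₀⟩ := exists_nat_ge (16 / L^2)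
  refine ⟨2 ^ (a₀ + 1), one_le_pow₀ (by norm_num), fun a => ?_⟩
  have h2rpow : (1:ℝ) ≤ (2:ℝ) ^ (ε * a) :=
    Real.one_le_rpow (by norm_num) (by positivity)
  rcases le_or_gt a (a₀ + 1) with h | h
  · calc (a + 1 : ℝ) ≤ (a₀ + 1 : ℕ) + 1 := by
          have := (Nat.cast_le (α := ℝ)).mpr h; linarith
    _ ≤ 2 ^ (a₀ + 1) := by exact_mod_cast Nat.succ_le_of_lt (Nat.lt_two_pow_self)
    _ ≤ 2 ^ (a₀ + 1) * (2:ℝ) ^ (ε * a) := le_mul_of_one_le_right (by positivity) h2rpow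
  · -- a ≥ a₀ + 2, in particular (a:ℝ) ≥ 16/L² and a ≥ 1
    have haR : (16 / L^2 : ℝ) ≤ a := by
      have : ((a₀ : ℝ)) ≤ a := by exact_mod_cast Nat.le_of_lt (Nat.lt_of_succ_lt h)
      linarith
    have ha1 : (1:ℝ) ≤ a := by
      have : (1:ℕ) ≤ a := by omega
      exact_mod_cast this
    have key : (a + 1 : ℝ) ≤ (2:ℝ) ^ (ε * a) := by
      rw [Real.rpow_def_of_pos (by norm_num)]
      have hx : (0:ℝ) ≤ Real.log 2 * (ε * a) := by positivity
      have := exp_ge_sq_div_four hx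
      have hsq : (L * a)^2 / 4 = (L^2 * a) * a / 4 := by ring
      have h16 : 16 ≤ L^2 * a := by
        rw [div_le_iff₀ (by positivity)] at haR
        linarith
      have : (L^2 * a) * a / 4 ≤ Real.exp (Real.log 2 * (ε * a)) := by
        calc (L^2 * a) * a / 4 = (L * a)^2/4 := by ring
        _ ≤ Real.exp (L * a) := exp_ge_sq_div_four (by positivity)
        _ = Real.exp (Real.log 2 * (ε * a)) := by rw [hL]; ring_nf
      calc (a + 1 : ℝ) ≤ (L^2 * a) * a / 4 := by nlinarith [h16, ha1]
      _ ≤ _ := this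
    calc (a+1:ℝ) ≤ (2:ℝ) ^ (ε * a) := key
    _ ≤ 2 ^ (a₀+1) * (2:ℝ) ^ (ε * a) :=
        le_mul_of_one_le_left (by positivity) (one_le_pow₀ (by norm_num))

lemma divisor_bound {ε : ℝ} (hε : 0 < ε) :
    ∃ C : ℝ, 1 ≤ C ∧ ∀ n : ℕ, n ≠ 0 → (n.divisors.card : ℝ) ≤ C * (n : ℝ) ^ ε := by
  obtain ⟨C₀, hC₀, hb⟩ := per_prime_bound hε
  set B := ⌈(2:ℝ) ^ (1/ε)⌉₊ with hB
  refine ⟨C₀ ^ (B + 1), one_le_pow₀ hC₀, fun n hn => ?_⟩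
  rw [Nat.card_divisors hn]
  push_cast
  -- key pointwise bound
  have key : ∀ p ∈ n.primeFactors,
      ((n.factorization p : ℝ) + 1) ≤
        (if p ≤ B then C₀ else 1) * ((p : ℝ) ^ (n.factorization p : ℕ)) ^ ε := by
    intro p hp
    have hpp : p.Prime := Nat.prime_of_mem_primeFactors hp
    have hp2 : (2:ℝ) ≤ p := by exact_mod_cast hpp.two_le
    set a := n.factorization p with ha
    have hcomm : ((p : ℝ) ^ (a : ℕ)) ^ ε = (p:ℝ) ^ (ε * a) := by
      rw [← Real.rpow_natCast (p:ℝ) a, ← Real.rpow_mul (by positivity), mul_comm]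
    by_cases hsmall : p ≤ B
    · simp only [if_pos hsmall]
      calc ((a:ℝ) + 1) ≤ C₀ * (2:ℝ) ^ (ε * a) := by exact_mod_cast hb a
      _ ≤ C₀ * (p:ℝ) ^ (ε * a) := by
          apply mul_le_mul_of_nonneg_left _ (by linarith)
          exact Real.rpow_le_rpow (by norm_num) hp2 (by positivity)
      _ = C₀ * ((p : ℝ) ^ (a:ℕ)) ^ ε := by rw [hcomm]
    · simp only [if_neg hsmall, one_mul]
      have hge : (2:ℝ) ^ (1/ε) ≤ p := by
        calc (2:ℝ) ^ (1/ε) ≤ B := Nat.le_ceil _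
        _ ≤ p := by exact_mod_cast Nat.le_of_not_le hsmall
      have h2le : (2:ℝ) ≤ (p:ℝ) ^ ε := by
        have := Real.rpow_le_rpow (by positivity) hge (le_of_lt hε)
        rwa [← Real.rpow_mul (by norm_num), one_div_mul_cancel (ne_of_gt hε),
          Real.rpow_one] at this
      calc ((a:ℝ) + 1) ≤ (2:ℝ) ^ (a:ℕ) := by exact_mod_cast (Nat.lt_two_pow_self (n := a))
      _ ≤ ((p:ℝ) ^ ε) ^ (a:ℕ) := pow_le_pow_left₀ (by norm_num) h2le a
      _ = ((p : ℝ) ^ (a:ℕ)) ^ ε := by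
          rw [hcomm, ← Real.rpow_natCast ((p:ℝ)^ε) a, ← Real.rpow_mul (by positivity)]
  calc (∏ p ∈ n.primeFactors, ((n.factorization p : ℝ) + 1))
      ≤ ∏ p ∈ n.primeFactors,
          ((if p ≤ B then C₀ else 1) * ((p : ℝ) ^ (n.factorization p : ℕ)) ^ ε) := by
        apply Finset.prod_le_prod (fun p _ => by positivity) key
  _ = (∏ p ∈ n.primeFactors, (if p ≤ B then C₀ else 1)) *
        ∏ p ∈ n.primeFactors, ((p : ℝ) ^ (n.factorization p : ℕ)) ^ ε :=
        Finset.prod_mul_distrib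
  _ ≤ C₀ ^ (B+1) * (n:ℝ) ^ ε := by
        apply mul_le_mul
        · -- product of weights
          rw [Finset.prod_ite, Finset.prod_const, Finset.prod_const, one_pow, mul_one]
          apply pow_le_pow_right₀ hC₀
          calc (n.primeFactors.filter (· ≤ B)).card
              ≤ (Finset.range (B+1)).card := by
                apply Finset.card_le_card
                intro p hp
                simp only [Finset.mem_filter] at hp
                simp [Nat.lt_succ_of_le hp.2]
          _ = B + 1 := Finset.card_range _
        · -- product of prime powers
          have hprod : ∏ p ∈ n.primeFactors, ((p:ℝ) ^ (n.factorization p : ℕ)) = (n:ℝ) := by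
            have := Nat.factorization_prod_pow_eq_self hn
            rw [Finsupp.prod] at this
            rw [← Nat.support_factorization]
            exact_mod_cast congrArg (Nat.cast (R := ℝ)) this
          rw [← hprod]
          rw [← Real.finset_prod_rpow _ _ (fun p _ => by positivity)]
        · positivity
        · positivity


/-- For every `ε > 0` there is `c_ε > 0` such that for every `N ≥ 1`
the union of the arithmetic progressions `((N+j)/N)·ℤ`, `j = 1, …, N`, has at least
`c_ε · N^{2−ε}` points in `[0, 2N]`. -/
theorem union_of_progressions_many_points (ε : ℝ) (hε : 0 < ε) :
    ∃ c : ℝ, 0 < c ∧ ∀ N : ℕ, 1 ≤ N →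
      c * (N : ℝ) ^ ((2 : ℝ) - ε) ≤
        (Nat.card ↥(Set.Icc (0 : ℝ) (2 * N) ∩
          ⋃ j ∈ Finset.Icc 1 N, {x : ℝ | ∃ k : ℤ, x = k * (((N : ℝ) + j) / N)}) : ℝ) := by
  obtain ⟨C, hC1, hC⟩ := divisor_bound (half_pos hε)
  have hCpos : 0 < C := lt_of_lt_of_le one_pos hC1
  set D := C * (2:ℝ) ^ (ε/2) with hD
  have hDpos : 0 < D := by positivity
  refine ⟨D⁻¹, by positivity, fun N hN => ?_⟩
  have hN0 : (0:ℝ) < N := by exact_mod_cast hN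
  set f : ℕ × ℕ → ℕ := fun q => q.2 * (N + q.1) with hf
  set P : Finset (ℕ × ℕ) := Finset.Icc 1 N ×ˢ Finset.Icc 1 N with hP
  set T : Finset ℕ := P.image f with hT
  have hmem : ∀ q ∈ P, 1 ≤ f q ∧ f q ≤ 2 * N^2 := by
    intro q hq
    rw [hP, Finset.mem_product, Finset.mem_Icc, Finset.mem_Icc] at hq
    constructor
    · exact Nat.mul_pos (by omega) (by omega)
    · calc f q = q.2 * (N + q.1) := rfl
      _ ≤ N * (N + N) := Nat.mul_le_mul hq.2.2 (Nat.add_le_add_left hq.1.2 N)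
      _ = 2 * N^2 := by ring
  -- fiber bound
  have hfiber : ∀ m ∈ T, ((P.filter (fun q => f q = m)).card : ℝ) ≤ D * (N:ℝ) ^ ε := by
    intro m hm
    obtain ⟨q0, hq0, hq0m⟩ := Finset.mem_image.mp hm
    have hm1 : 1 ≤ m := hq0m ▸ (hmem q0 hq0).1
    have hm2 : m ≤ 2 * N^2 := hq0m ▸ (hmem q0 hq0).2
    have hdiv : (P.filter (fun q => f q = m)).card ≤ m.divisors.card := by
      apply Finset.card_le_card_of_injOn (fun q => N + q.1)
      · intro q hq
        rw [Finset.mem_coe, Finset.mem_filter] at hq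
        rw [Finset.mem_coe, Nat.mem_divisors]
        refine ⟨⟨q.2, ?_⟩, Nat.one_le_iff_ne_zero.mp hm1⟩
        rw [← hq.2]
        show q.2 * (N + q.1) = (N + q.1) * q.2
        ring
      · intro q hq q' hq' he
        simp only [Finset.coe_filter, Set.mem_setOf_eq] at hq hq'
        have h1 : q.1 = q'.1 := by
          have he' : N + q.1 = N + q'.1 := he
          omega
        have h2 : q.2 = q'.2 := by
          have hfe : q.2 * (N + q.1) = q'.2 * (N + q.1) := by
            have hqq : f q = f q' := hq.2.trans hq'.2.symm
            simpa [hf, h1] using hqq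
          exact Nat.eq_of_mul_eq_mul_right (by omega) hfe
        exact Prod.ext h1 h2
    calc ((P.filter (fun q => f q = m)).card : ℝ) ≤ (m.divisors.card : ℝ) := by
          exact_mod_cast hdiv
    _ ≤ C * (m : ℝ) ^ (ε/2) := hC m (by omega)
    _ ≤ C * (2 * (N:ℝ)^2) ^ (ε/2) := by
        apply mul_le_mul_of_nonneg_left _ (le_of_lt hCpos)
        apply Real.rpow_le_rpow (by positivity) _ (by positivity)
        calc (m:ℝ) ≤ ((2 * N^2 : ℕ) : ℝ) := by exact_mod_cast hm2
        _ = 2 * (N:ℝ)^2 := by push_cast; ring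
    _ = D * (N:ℝ) ^ ε := by
        rw [hD, Real.mul_rpow (by norm_num) (by positivity)]
        rw [← Real.rpow_natCast (N:ℝ) 2, ← Real.rpow_mul (le_of_lt hN0)]
        rw [show ((2:ℕ):ℝ) * (ε/2) = ε by push_cast; ring]
        ring
  -- counting
  have hPcard : P.card = N^2 := by
    rw [hP, Finset.card_product, Nat.card_Icc]
    simp [sq]
  have hsum : P.card = ∑ m ∈ T, (P.filter (fun q => f q = m)).card :=
    Finset.card_eq_sum_card_fiberwise (fun q hq => Finset.mem_image_of_mem f hq)
  have hcard : ((N:ℝ))^2 ≤ (T.card : ℝ) * (D * (N:ℝ) ^ ε) := by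
    calc ((N:ℝ))^2 = ((P.card : ℕ) : ℝ) := by rw [hPcard]; push_cast; ring
    _ = ∑ m ∈ T, ((P.filter (fun q => f q = m)).card : ℝ) := by
        rw [hsum]; push_cast; rfl
    _ ≤ ∑ _m ∈ T, (D * (N:ℝ) ^ ε) := Finset.sum_le_sum hfiber
    _ = (T.card : ℝ) * (D * (N:ℝ) ^ ε) := by rw [Finset.sum_const, nsmul_eq_mul]
  have hTcard : D⁻¹ * (N:ℝ) ^ ((2:ℝ) - ε) ≤ (T.card : ℝ) := by
    have hNε : (0:ℝ) < (N:ℝ) ^ ε := Real.rpow_pos_of_pos hN0 _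
    rw [inv_mul_le_iff₀ hDpos]
    rw [Real.rpow_sub hN0, div_le_iff₀ hNε]
    calc (N:ℝ) ^ (2:ℝ) = ((N:ℝ))^2 := by
          rw [← Real.rpow_natCast (N:ℝ) 2]; norm_num
    _ ≤ (T.card : ℝ) * (D * (N:ℝ) ^ ε) := hcard
    _ = D * (T.card : ℝ) * (N:ℝ) ^ ε := by ring
  -- real image
  set g : ℕ → ℝ := fun m => (m:ℝ) / N with hg
  have hginj : Function.Injective g := by
    intro a b hab
    rw [hg] at hab
    field_simp at hab
    exact_mod_cast hab
  set T' : Finset ℝ := T.image g with hT'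
  have hT'card : T'.card = T.card := Finset.card_image_of_injective T hginj
  set S : Set ℝ := Set.Icc (0 : ℝ) (2 * N) ∩
      ⋃ j ∈ Finset.Icc 1 N, {x : ℝ | ∃ k : ℤ, x = k * (((N : ℝ) + j) / N)} with hS
  have hsub : ↑T' ⊆ S := by
    intro x hx
    rw [hT'] at hx
    simp only [Finset.coe_image, Set.mem_image, Finset.mem_coe] at hx
    obtain ⟨m, hm, rfl⟩ := hx
    obtain ⟨q, hq, hfq⟩ := Finset.mem_image.mp hm
    have hb := hmem q hq
    rw [hP, Finset.mem_product, Finset.mem_Icc, Finset.mem_Icc] at hq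
    constructor
    · constructor
      · positivity
      · rw [hg, div_le_iff₀ hN0]
        calc ((m:ℕ):ℝ) ≤ ((2*N^2 : ℕ):ℝ) := by exact_mod_cast hfq ▸ hb.2
        _ = 2 * (N:ℝ) * N := by push_cast; ring
    · apply Set.mem_iUnion₂.mpr
      refine ⟨q.1, Finset.mem_Icc.mpr ⟨hq.1.1, hq.1.2⟩, ⟨(q.2 : ℤ), ?_⟩⟩
      rw [hg, ← hfq, hf]
      push_cast
      ring
  have hfin : S.Finite := by
    apply Set.Finite.subset (Finset.finite_toSet
      ((Finset.range (2*N^2+1)).image g))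
    intro x hx
    obtain ⟨⟨hx0, hx2⟩, hxU⟩ := hx
    obtain ⟨j, hj, k, hk⟩ := Set.mem_iUnion₂.mp hxU
    rw [Finset.mem_Icc] at hj
    have hstep : (0:ℝ) < ((N:ℝ) + j) / N := by positivity
    have hkR : (0:ℝ) ≤ (k:ℝ) := by
      by_contra hkneg
      push_neg at hkneg
      have : x < 0 := by
        rw [hk]
        exact mul_neg_of_neg_of_pos hkneg hstep
      linarith
    have hk0 : (0:ℤ) ≤ k := by exact_mod_cast hkR
    set m : ℕ := k.toNat * (N + j) with hm
    have hxm : x = g m := by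
      have hkk : ((k.toNat : ℕ) : ℝ) = (k : ℝ) := by
        exact_mod_cast congrArg (fun z : ℤ => (z : ℝ)) (Int.toNat_of_nonneg hk0)
      show x = ((m : ℕ) : ℝ) / N
      rw [hm, hk]
      push_cast
      rw [hkk]
      ring
    have hmle : m ≤ 2 * N^2 := by
      have : ((m:ℕ):ℝ) ≤ 2 * (N:ℝ)^2 := by
        rw [hxm, hg, div_le_iff₀ hN0] at hx2
        calc ((m:ℕ):ℝ) ≤ 2 * (N:ℝ) * N := hx2
        _ = 2 * (N:ℝ)^2 := by ring
      have h2 : ((m:ℕ):ℝ) ≤ ((2 * N^2 : ℕ):ℝ) := by push_cast; push_cast at this; linarith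
      exact_mod_cast h2
    simp only [Finset.coe_image, Set.mem_image, Finset.mem_coe, Finset.mem_range]
    exact ⟨m, by omega, hxm.symm⟩
  -- conclude
  have hfinal : (T.card : ℝ) ≤ (Nat.card ↥S : ℝ) := by
    have h1 : Nat.card ↥(↑T' : Set ℝ) = T'.card := by
      rw [Nat.card_coe_set_eq, Set.ncard_coe_finset]
    have h2 : Nat.card ↥(↑T' : Set ℝ) ≤ Nat.card ↥S := Nat.card_mono hfin hsub
    rw [h1, hT'card] at h2
    exact_mod_cast h2
  exact le_trans hTcard hfinal
end
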